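/- arXiv:2307.00962 — 2 statements merged into one kernel-verified Lean document; each statement's English description precedes it below -/
import Mathlib

section
/- Under assumption (A-1), the spectrum of the quantum walk U = SC equals the unit circle {z ∈ ℂ : |z| = 1}, and every eigenvalue of U lies on the unit circle and has a finite-dimensional eigenspace. -/
noncomputable section

namespace QWPaper

open Complex

/-- Sites of the two-dimensional lattice. -/
abbrev Site : Type := ℤ × ℤ

/-- Chirality indices: `0 = ←`, `1 = →`, `2 = ↓`, `3 = ↑`. -/
abbrev Chir : Type := Fin 4

abbrev V : Type := EuclideanSpace ℂ (Fin 4)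

/-- The Hilbert space `H = ℓ²(ℤ²; ℂ⁴)`. -/
abbrev H : Type := lp (fun _ : Site => V) 2

/-- The inner domain `Ω^i = {x : |x₁| ≤ M₀, |x₂| ≤ M₀}`. -/
def innerDom (M₀ : ℤ) : Set Site := {x | |x.1| ≤ M₀ ∧ |x.2| ≤ M₀}

/-- `S` is the shift operator:
`(Su)(x) = (u_←(x+e₁), u_→(x−e₁), u_↓(x+e₂), u_↑(x−e₂))`. -/
def IsShiftOp (S : H →L[ℂ] H) : Prop :=
  ∀ (u : H) (x : Site),
    (S u) x 0 = u (x.1 + 1, x.2) 0 ∧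
    (S u) x 1 = u (x.1 - 1, x.2) 1 ∧
    (S u) x 2 = u (x.1, x.2 + 1) 2 ∧
    (S u) x 3 = u (x.1, x.2 - 1) 3

/-- `A` is the bounded operator of pointwise multiplication by the matrix family `C`. -/
def IsCoinOp (A : H →L[ℂ] H) (C : Site → Matrix Chir Chir ℂ) : Prop :=
  ∀ (u : H) (x : Site) (i : Chir), (A u) x i = ∑ j : Chir, C x i j * u x j

/-- Every coin matrix is unitary. -/
def IsUnitaryCoin (C : Site → Matrix Chir Chir ℂ) : Prop :=
  ∀ x, C x ∈ Matrix.unitaryGroup Chir ℂ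

/-- Assumption (A-1): `C(x) = I₄` off `Ω^i`, with `M₀ ≥ 1`. -/
def SatisfiesA1 (C : Site → Matrix Chir Chir ℂ) (M₀ : ℤ) : Prop :=
  1 ≤ M₀ ∧ ∀ x, x ∉ innerDom M₀ → C x = 1

/-- `D_x(θ) = diag(e^{iθx₁}, e^{−iθx₁}, e^{iθx₂}, e^{−iθx₂})`. -/
def Dmat (θ : ℂ) (x : Site) : Matrix Chir Chir ℂ :=
  Matrix.diagonal ![Complex.exp (Complex.I * θ * x.1), Complex.exp (-(Complex.I * θ * x.1)),
    Complex.exp (Complex.I * θ * x.2), Complex.exp (-(Complex.I * θ * x.2))]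

/-- The translated coin `D_x(θ) C(x) D_x(θ)⁻¹`. -/
def transCoin (θ : ℂ) (C : Site → Matrix Chir Chir ℂ) (x : Site) : Matrix Chir Chir ℂ :=
  Dmat θ x * C x * (Dmat θ x)⁻¹

/-- The complex translated walk `U(θ) = e^{−iθ} S M(θ)`. -/
def transWalkOp (θ : ℂ) (S Mθ : H →L[ℂ] H) : H →L[ℂ] H :=
  Complex.exp (-(Complex.I * θ)) • (S.comp Mθ)

/-- `⟨x⟩ = (1 + |x|²)^{1/2}`. -/
def jnorm (x : Site) : ℝ := Real.sqrt (1 + ((x.1 : ℝ) ^ 2 + (x.2 : ℝ) ^ 2))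

/-- Super-exponentially decreasing elements of `H`: `e^{τ⟨x⟩} f ∈ H` for every `τ > 0`. -/
def SuperExpDecay (f : H) : Prop :=
  ∀ τ : ℝ, 0 < τ → Memℓp (fun x : Site => (Real.exp (τ * jnorm x) • f x : V)) 2

/-- Pointwise shift of an arbitrary `ℂ⁴`-valued map on `ℤ²`. -/
def ptShift (v : Site → Chir → ℂ) (x : Site) : Chir → ℂ :=
  ![v (x.1 + 1, x.2) 0, v (x.1 - 1, x.2) 1, v (x.1, x.2 + 1) 2, v (x.1, x.2 - 1) 3]

/-- Pointwise coin action on an arbitrary `ℂ⁴`-valued map on `ℤ²`. -/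
def ptCoin (C : Site → Matrix Chir Chir ℂ) (u : Site → Chir → ℂ) (x : Site) (i : Chir) : ℂ :=
  ∑ j : Chir, C x i j * u x j

/-- Pointwise action of the walk `U = SC` on arbitrary `ℂ⁴`-valued maps. -/
def ptWalk (C : Site → Matrix Chir Chir ℂ) (u : Site → Chir → ℂ) : Site → Chir → ℂ :=
  ptShift (ptCoin C u)

/-- `u` is a pointwise solution of `U u = e^{−iκ} u`. -/
def IsPtSolution (C : Site → Matrix Chir Chir ℂ) (κ : ℂ) (u : Site → Chir → ℂ) : Prop :=
  ∀ (x : Site) (i : Chir), ptWalk C u x i = Complex.exp (-(Complex.I * κ)) * u x i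

/-- `u` is outgoing with the explicit sequences `aL aR aD aU`. -/
def IsOutgoingWith (M₀ : ℤ) (κ : ℂ) (aL aR aD aU : ℤ → ℂ) (u : Site → Chir → ℂ) : Prop :=
  (∀ x : Site, x.1 < -M₀ → u x 0 = aL x.2 * Complex.exp (-(Complex.I * κ * x.1))) ∧
  (∀ x : Site, M₀ < x.1 → u x 0 = 0) ∧
  (∀ x : Site, x.1 < -M₀ → u x 1 = 0) ∧
  (∀ x : Site, M₀ < x.1 → u x 1 = aR x.2 * Complex.exp (Complex.I * κ * x.1)) ∧
  (∀ x : Site, x.2 < -M₀ → u x 2 = aD x.1 * Complex.exp (-(Complex.I * κ * x.2))) ∧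
  (∀ x : Site, M₀ < x.2 → u x 2 = 0) ∧
  (∀ x : Site, x.2 < -M₀ → u x 3 = 0) ∧
  (∀ x : Site, M₀ < x.2 → u x 3 = aU x.1 * Complex.exp (Complex.I * κ * x.2))

/-- `u` is an outgoing map. -/
def IsOutgoing (M₀ : ℤ) (κ : ℂ) (u : Site → Chir → ℂ) : Prop :=
  ∃ aL aR aD aU : ℤ → ℂ, IsOutgoingWith M₀ κ aL aR aD aU u

/-- Elastic coin: column `j` of `C_el(x)` is `e^{iα_j(x)} 𝐞_{σ(x)(j)}`. -/
def elasticCoin (σ : Site → Equiv.Perm Chir) (α : Site → Chir → ℝ) (x : Site) :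
    Matrix Chir Chir ℂ :=
  Matrix.of fun i j => if i = σ x j then Complex.exp (Complex.I * (α x j : ℂ)) else 0

/-- The initial state `δ_y 𝐞_j ∈ H`. -/
def deltaState (y : Site) (j : Chir) : H := lp.single 2 y (EuclideanSpace.single j 1)

/-- `(q, p)` is the trajectory map of the elastic walk `Uel`:
`Uel^t (δ_y 𝐞_j)` is a modulus-one multiple of `δ_{q(t,y,j)} 𝐞_{p(t,y,j)}`. -/
def IsTrajectory (Uel : unitary (H →L[ℂ] H))
    (q : ℤ → Site → Chir → Site) (p : ℤ → Site → Chir → Chir) : Prop :=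
  (∀ y j, q 0 y j = y ∧ p 0 y j = j) ∧
  ∀ (t : ℤ) (y : Site) (j : Chir), ∃ c : ℂ, ‖c‖ = 1 ∧
    ((Uel ^ t : unitary (H →L[ℂ] H)) : H →L[ℂ] H) (deltaState y j)
      = c • deltaState (q t y j) (p t y j)

/-- Euclidean norm of a lattice point. -/
def znorm (x : Site) : ℝ := Real.sqrt ((x.1 : ℝ) ^ 2 + (x.2 : ℝ) ^ 2)

/-- The parts of the barrier `K`. -/
def K1p (M₀ : ℤ) : Set Site := {x | x.1 = M₀ ∧ |x.2| ≤ M₀}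
def K1m (M₀ : ℤ) : Set Site := {x | x.1 = -M₀ ∧ |x.2| ≤ M₀}
def K2p (M₀ : ℤ) : Set Site := {x | x.2 = M₀ ∧ |x.1| ≤ M₀}
def K2m (M₀ : ℤ) : Set Site := {x | x.2 = -M₀ ∧ |x.1| ≤ M₀}
def Kbar (M₀ : ℤ) : Set Site := K1p M₀ ∪ K1m M₀ ∪ K2p M₀ ∪ K2m M₀

/-- The exterior domain `Ω^e = (ℤ² \ Ω^i) ∪ K`. -/
def outerDom (M₀ : ℤ) : Set Site := {x | x ∉ innerDom M₀} ∪ Kbar M₀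

/-- Membership in the interior space `H_i`. -/
def memHi (M₀ : ℤ) (u : H) : Prop :=
  (∀ x, x ∉ innerDom M₀ → ∀ i : Chir, u x i = 0) ∧
  (∀ x ∈ K1p M₀, u x 0 = 0) ∧ (∀ x ∈ K1m M₀, u x 1 = 0) ∧
  (∀ x ∈ K2p M₀, u x 2 = 0) ∧ (∀ x ∈ K2m M₀, u x 3 = 0)

/-- Membership in the exterior space `H_e`. -/
def memHe (M₀ : ℤ) (u : H) : Prop :=
  (∀ x, x ∉ outerDom M₀ → ∀ i : Chir, u x i = 0) ∧
  (∀ x ∈ K1m M₀ ∪ K2p M₀ ∪ K2m M₀, u x 0 = 0) ∧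
  (∀ x ∈ K1p M₀ ∪ K2p M₀ ∪ K2m M₀, u x 1 = 0) ∧
  (∀ x ∈ K2m M₀ ∪ K1p M₀ ∪ K1m M₀, u x 2 = 0) ∧
  (∀ x ∈ K2p M₀ ∪ K1p M₀ ∪ K1m M₀, u x 3 = 0)

/-- The non-penetrable barrier conditions for `U_np`. -/
def IsBarrierWalk (M₀ : ℤ) (Unp : H →L[ℂ] H) : Prop :=
  ∀ u : H,
    (∀ x ∈ K1p M₀, (Unp u) (x.1 + 1, x.2) 1 = u x 0) ∧
    (∀ x ∈ K1m M₀, (Unp u) (x.1 - 1, x.2) 0 = u x 0) ∧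
    (∀ x ∈ K2p M₀, (Unp u) (x.1, x.2 + 1) 3 = u x 2) ∧
    (∀ x ∈ K2m M₀, (Unp u) (x.1, x.2 - 1) 2 = u x 3)

/-- The rectangular loop `L_{ε,s}(μ)` (boundary of the rectangle with half-widths `a`, `b`). -/
def loopSet (μ a b : ℝ) : Set ℂ :=
  {κ | |κ.re - μ| ≤ a ∧ |κ.im| ≤ b ∧ (|κ.re - μ| = a ∨ |κ.im| = b)}

/-- The four-corner elastic coin. -/
def fourCornerCoin (m₀ n₀ : ℤ) (x : Site) : Matrix Chir Chir ℂ :=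
  if x = ((0 : ℤ), (0 : ℤ)) then !![0,1,0,0; 0,0,1,0; 0,0,0,1; 1,0,0,0]
  else if x = (m₀, (0 : ℤ)) then !![0,0,1,0; 1,0,0,0; 0,0,0,1; 0,1,0,0]
  else if x = (m₀, n₀) then !![0,0,0,1; 1,0,0,0; 0,1,0,0; 0,0,1,0]
  else if x = ((0 : ℤ), n₀) then !![0,1,0,0; 0,0,0,1; 1,0,0,0; 0,0,1,0]
  else 1

/-- The four corners. -/
def corners (m₀ n₀ : ℤ) : Set Site :=
  {((0 : ℤ), (0 : ℤ)), (m₀, (0 : ℤ)), (m₀, n₀), ((0 : ℤ), n₀)}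

/-- A perturbed four-corner coin `C_ε`. -/
def IsPerturbedFourCorner (m₀ n₀ : ℤ) (ε : ℝ) (Cε : Site → Matrix Chir Chir ℂ) : Prop :=
  IsUnitaryCoin Cε ∧
  (∀ x, x ∉ corners m₀ n₀ → Cε x = 1) ∧
  (∀ x ∈ corners m₀ n₀, ∀ i j : Chir, ‖Cε x i j - fourCornerCoin m₀ n₀ x i j‖ < ε) ∧
  Cε ((0 : ℤ), (0 : ℤ)) 1 0 = 0 ∧ Cε ((0 : ℤ), (0 : ℤ)) 3 2 = 0 ∧
  Cε (m₀, (0 : ℤ)) 3 2 = 0 ∧ Cε (m₀, (0 : ℤ)) 0 1 = 0 ∧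
  Cε (m₀, n₀) 2 3 = 0 ∧ Cε (m₀, n₀) 0 1 = 0 ∧
  Cε ((0 : ℤ), n₀) 1 0 = 0 ∧ Cε ((0 : ℤ), n₀) 2 3 = 0

/-- `c_ε⁺ = c_{↑,←}(0,0) c_{←,↓}(m₀,0) c_{↓,→}(m₀,n₀) c_{→,↑}(0,n₀)`. -/
def cPlus (m₀ n₀ : ℤ) (Cε : Site → Matrix Chir Chir ℂ) : ℂ :=
  Cε ((0 : ℤ), (0 : ℤ)) 3 0 * Cε (m₀, (0 : ℤ)) 0 2 * Cε (m₀, n₀) 2 1 * Cε ((0 : ℤ), n₀) 1 3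

/-- `c_ε⁻ = c_{→,↓}(0,0) c_{↑,→}(m₀,0) c_{←,↑}(m₀,n₀) c_{↓,←}(0,n₀)`. -/
def cMinus (m₀ n₀ : ℤ) (Cε : Site → Matrix Chir Chir ℂ) : ℂ :=
  Cε ((0 : ℤ), (0 : ℤ)) 1 2 * Cε (m₀, (0 : ℤ)) 3 1 * Cε (m₀, n₀) 0 3 * Cε ((0 : ℤ), n₀) 2 0

/-- `u ∈ H` is supported on the set `A ⊆ ℤ² × {←,→,↓,↑}`. -/
def SupportedOn (u : H) (A : Set (Site × Chir)) : Prop :=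
  ∀ (x : Site) (i : Chir), (x, i) ∉ A → u x i = 0

/-- The image of the closed trajectory `Φ₊` of the four-corner walk. -/
def imPhiPlus (m₀ n₀ : ℤ) : Set (Site × Chir) :=
  {w | ∃ t : ℤ, 1 ≤ t ∧ t ≤ n₀ ∧ w = (((0 : ℤ), t), (3 : Chir))} ∪
  {w | ∃ t : ℤ, 1 ≤ t ∧ t ≤ m₀ ∧ w = ((t, n₀), (1 : Chir))} ∪
  {w | ∃ t : ℤ, 0 ≤ t ∧ t ≤ n₀ - 1 ∧ w = ((m₀, t), (2 : Chir))} ∪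
  {w | ∃ t : ℤ, 0 ≤ t ∧ t ≤ m₀ - 1 ∧ w = ((t, (0 : ℤ)), (0 : Chir))}

/-- The image of the reversed closed trajectory `Φ₋` of the four-corner walk. -/
def imPhiMinus (m₀ n₀ : ℤ) : Set (Site × Chir) :=
  {w | ∃ t : ℤ, 1 ≤ t ∧ t ≤ m₀ ∧ w = ((t, (0 : ℤ)), (1 : Chir))} ∪
  {w | ∃ t : ℤ, 1 ≤ t ∧ t ≤ n₀ ∧ w = ((m₀, t), (3 : Chir))} ∪
  {w | ∃ t : ℤ, 0 ≤ t ∧ t ≤ m₀ - 1 ∧ w = ((t, n₀), (0 : Chir))} ∪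
  {w | ∃ t : ℤ, 0 ≤ t ∧ t ≤ n₀ - 1 ∧ w = (((0 : ℤ), t), (2 : Chir))}

/-- The eight outgoing tails starting from the four corners. -/
def tails (m₀ n₀ : ℤ) : Set (Site × Chir) :=
  {w | ∃ N y₂ : ℤ, 1 ≤ N ∧ (y₂ = 0 ∨ y₂ = n₀) ∧ w = ((-N, y₂), (0 : Chir))} ∪
  {w | ∃ N y₁ : ℤ, 1 ≤ N ∧ (y₁ = 0 ∨ y₁ = m₀) ∧ w = ((y₁, n₀ + N), (3 : Chir))} ∪
  {w | ∃ N y₁ : ℤ, 1 ≤ N ∧ (y₁ = 0 ∨ y₁ = m₀) ∧ w = ((y₁, -N), (2 : Chir))} ∪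
  {w | ∃ N y₂ : ℤ, 1 ≤ N ∧ (y₂ = 0 ∨ y₂ = n₀) ∧ w = ((m₀ + N, y₂), (1 : Chir))}

/-- The shape resonance perturbation `C_ε` of the barrier coin `C_np`. -/
def IsShapePerturbation (M₀ : ℤ) (Cnp : Site → Matrix Chir Chir ℂ) (ε : ℝ)
    (Cε : Site → Matrix Chir Chir ℂ) : Prop :=
  IsUnitaryCoin Cε ∧ (∀ x, x ∉ Kbar M₀ → Cε x = Cnp x) ∧
  (∀ x ∈ Kbar M₀, ∀ i j : Chir, ‖Cε x i j - Cnp x i j‖ < ε)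

/-- Counterclockwise contour integral of an operator-valued map over the boundary of the
rectangle centered at `μ ∈ ℝ` with half-widths `a` and `b`. -/
def rectIntegral (f : ℂ → (H →L[ℂ] H)) (μ a b : ℝ) : H →L[ℂ] H :=
  ((∫ t in (μ - a)..(μ + a), f (t - b * Complex.I)) -
      (∫ t in (μ - a)..(μ + a), f (t + b * Complex.I))) +
  Complex.I • ((∫ s in (-b)..b, f ((μ + a : ℝ) + s * Complex.I)) -
      (∫ s in (-b)..b, f ((μ - a : ℝ) + s * Complex.I)))

/-- The Riesz-type projection `(1/2π) ∮ e^{−iκ} (A − e^{−iκ})^{−1} dκ` over the rectangular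
loop of half-widths `a`, `b` around `μ`. -/
def rieszProj (A : H →L[ℂ] H) (μ a b : ℝ) : H →L[ℂ] H :=
  (1 / (2 * Real.pi)) •
    rectIntegral (fun κ => Complex.exp (-(Complex.I * κ)) •
      Ring.inverse (A - Complex.exp (-(Complex.I * κ)) • (1 : H →L[ℂ] H))) μ a b

/-! ### Auxiliary lemmas for the spectral theorem -/

section AuxSpectrum

variable {M₀ : ℤ} {C : Site → Matrix Chir Chir ℂ} {S Cop : H →L[ℂ] H} {z : ℂ} {u : H}

lemma not_inner_of (y : Site) (h : M₀ < y.1 ∨ y.1 < -M₀ ∨ M₀ < y.2 ∨ y.2 < -M₀) :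
    y ∉ innerDom M₀ := by
  intro hm
  obtain ⟨a, b⟩ := hm
  rw [abs_le] at a b
  omega

lemma coord_norm_le (v : V) (i : Chir) : ‖v i‖ ≤ ‖v‖ := by
  rw [EuclideanSpace.norm_eq]
  have h1 : ‖v i‖ ^ 2 ≤ ∑ j, ‖v j‖ ^ 2 :=
    Finset.single_le_sum (f := fun j => ‖v j‖ ^ 2) (fun j _ => sq_nonneg _) (Finset.mem_univ i)
  calc ‖v i‖ = Real.sqrt (‖v i‖ ^ 2) := (Real.sqrt_sq (norm_nonneg _)).symm
    _ ≤ _ := Real.sqrt_le_sqrt h1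

lemma ray_vanish (u : H) (i : Chir) {x : Site} (g : ℕ → Site) (hg : Function.Injective g)
    (hgx : g 0 = x)
    (hstep : ∀ k : ℕ, ∃ c : ℂ, ‖c‖ = 1 ∧ u (g (k + 1)) i = c * u (g k) i) :
    u x i = 0 := by
  subst hgx
  by_contra h0
  have hconst : ∀ k, ‖u (g k) i‖ = ‖u (g 0) i‖ := by
    intro k
    induction k with
    | zero => rfl
    | succ k ih =>
      obtain ⟨c, hc, he⟩ := hstep k
      rw [he, norm_mul, hc, one_mul, ih]
  have hc0 : 0 < ‖u (g 0) i‖ := norm_pos_iff.mpr h0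
  have hsum : Summable fun x : Site => ‖u x‖ ^ (2 : ENNReal).toReal :=
    (lp.memℓp u).summable (by norm_num)
  have hcpos : (0 : ℝ) < ‖u (g 0) i‖ ^ (2 : ENNReal).toReal := Real.rpow_pos_of_pos hc0 _
  have hev : ∀ᶠ x in Filter.cofinite,
      ‖u x‖ ^ (2 : ENNReal).toReal < ‖u (g 0) i‖ ^ (2 : ENNReal).toReal :=
    hsum.tendsto_cofinite_zero.eventually (gt_mem_nhds hcpos)
  have hfin : {x : Site | ‖u (g 0) i‖ ^ (2 : ENNReal).toReal ≤ ‖u x‖ ^ (2 : ENNReal).toReal}.Finite :=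
    (Filter.eventually_cofinite.mp hev).subset fun x hx => not_lt.mpr hx
  have hinf : {x : Site |
      ‖u (g 0) i‖ ^ (2 : ENNReal).toReal ≤ ‖u x‖ ^ (2 : ENNReal).toReal}.Infinite := by
    refine Set.infinite_of_injective_forall_mem hg fun k => ?_
    have h1 : ‖u (g 0) i‖ ≤ ‖u (g k)‖ := (hconst k).symm.le.trans (coord_norm_le _ _)
    exact Real.rpow_le_rpow (norm_nonneg _) h1 ENNReal.toReal_nonneg
  exact hinf hfin

lemma eig_steps (hA1 : SatisfiesA1 C M₀) (hS : IsShiftOp S) (hCop : IsCoinOp Cop C)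
    (hu : (S.comp Cop) u = z • u) :
    (∀ y : Site, ((y.1 + 1, y.2) : Site) ∉ innerDom M₀ → u (y.1 + 1, y.2) 0 = z * u y 0) ∧
    (∀ y : Site, ((y.1 - 1, y.2) : Site) ∉ innerDom M₀ → u (y.1 - 1, y.2) 1 = z * u y 1) ∧
    (∀ y : Site, ((y.1, y.2 + 1) : Site) ∉ innerDom M₀ → u (y.1, y.2 + 1) 2 = z * u y 2) ∧
    (∀ y : Site, ((y.1, y.2 - 1) : Site) ∉ innerDom M₀ → u (y.1, y.2 - 1) 3 = z * u y 3) := by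
  have h1 : S (Cop u) = z • u := hu
  have hzu : ∀ (y : Site) (i : Chir), (S (Cop u)) y i = z * u y i := by
    intro y i
    rw [h1, lp.coeFn_smul, Pi.smul_apply]
    rfl
  have hcoin : ∀ w : Site, w ∉ innerDom M₀ → ∀ i : Chir, (Cop u) w i = u w i := by
    intro w hw i
    rw [hCop u w i, hA1.2 w hw]
    simp [Matrix.one_apply, ite_mul]
  refine ⟨fun y hy => ?_, fun y hy => ?_, fun y hy => ?_, fun y hy => ?_⟩
  · have h := (hS (Cop u) y).1
    rw [hcoin _ hy 0] at h
    exact h.symm.trans (hzu y 0)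
  · have h := (hS (Cop u) y).2.1
    rw [hcoin _ hy 1] at h
    exact h.symm.trans (hzu y 1)
  · have h := (hS (Cop u) y).2.2.1
    rw [hcoin _ hy 2] at h
    exact h.symm.trans (hzu y 2)
  · have h := (hS (Cop u) y).2.2.2
    rw [hcoin _ hy 3] at h
    exact h.symm.trans (hzu y 3)

lemma eigen_support (hA1 : SatisfiesA1 C M₀) (hS : IsShiftOp S) (hCop : IsCoinOp Cop C)
    (hz : ‖z‖ = 1) (hu : (S.comp Cop) u = z • u) :
    ∀ (x : Site) (i : Chir), (M₀ + 2 ≤ |x.1| ∨ M₀ + 2 ≤ |x.2|) → u x i = 0 := by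
  obtain ⟨h0, h1, h2, h3⟩ := eig_steps hA1 hS hCop hu
  have hz0 : z ≠ 0 := by
    intro h
    rw [h] at hz
    simp at hz
  have hziv : ‖z⁻¹‖ = 1 := by rw [norm_inv, hz]; norm_num
  intro x i hx
  rw [le_abs, le_abs] at hx
  have hinjp : Function.Injective (fun k : ℕ => ((x.1 + (k : ℤ), x.2) : Site)) := by
    intro a b hab; simp only [Prod.mk.injEq] at hab; omega
  have hinjm : Function.Injective (fun k : ℕ => ((x.1 - (k : ℤ), x.2) : Site)) := by
    intro a b hab; simp only [Prod.mk.injEq] at hab; omega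
  have hinjp2 : Function.Injective (fun k : ℕ => ((x.1, x.2 + (k : ℤ)) : Site)) := by
    intro a b hab; simp only [Prod.mk.injEq] at hab; omega
  have hinjm2 : Function.Injective (fun k : ℕ => ((x.1, x.2 - (k : ℤ)) : Site)) := by
    intro a b hab; simp only [Prod.mk.injEq] at hab; omega
  fin_cases i
  · -- chirality 0 : steps in +e₁ direction
    have hfwd : (∀ k : ℕ, ((x.1 + (k : ℤ) + 1, x.2) : Site) ∉ innerDom M₀) → u x 0 = 0 := by
      intro hc
      refine ray_vanish u _ _ hinjp (by simp) fun k => ⟨z, hz, ?_⟩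
      beta_reduce
      push_cast
      rw [← add_assoc]
      exact h0 (x.1 + (k : ℤ), x.2) (hc k)
    rcases hx with h | h
    · rcases h with h | h
      · exact hfwd fun k => not_inner_of _ (by left; omega)
      · -- x.1 ≤ -(M₀+2) : backward ray
        refine ray_vanish u _ _ hinjm (by simp) fun k => ⟨z⁻¹, hziv, ?_⟩
        beta_reduce
        push_cast
        have hstep := h0 (x.1 - ((k : ℤ) + 1), x.2) (not_inner_of _ (by right; left; omega))
        rw [show x.1 - ((k : ℤ) + 1) + 1 = x.1 - (k : ℤ) from by ring] at hstep
        rw [hstep, inv_mul_cancel_left₀ hz0]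
    · exact hfwd fun k => not_inner_of _ (by
        rcases h with h | h
        · right; right; left; omega
        · right; right; right; omega)
  · -- chirality 1 : steps in -e₁ direction
    have hfwd : (∀ k : ℕ, ((x.1 - (k : ℤ) - 1, x.2) : Site) ∉ innerDom M₀) → u x 1 = 0 := by
      intro hc
      refine ray_vanish u _ _ hinjm (by simp) fun k => ⟨z, hz, ?_⟩
      beta_reduce
      push_cast
      rw [show x.1 - ((k : ℤ) + 1) = x.1 - (k : ℤ) - 1 from by ring]
      exact h1 (x.1 - (k : ℤ), x.2) (hc k)
    rcases hx with h | h
    · rcases h with h | h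
      · -- x.1 ≥ M₀+2 : backward ray
        refine ray_vanish u _ _ hinjp (by simp) fun k => ⟨z⁻¹, hziv, ?_⟩
        beta_reduce
        push_cast
        have hstep := h1 (x.1 + ((k : ℤ) + 1), x.2) (not_inner_of _ (by left; omega))
        rw [show x.1 + ((k : ℤ) + 1) - 1 = x.1 + (k : ℤ) from by ring] at hstep
        rw [hstep, inv_mul_cancel_left₀ hz0]
      · exact hfwd fun k => not_inner_of _ (by right; left; omega)
    · exact hfwd fun k => not_inner_of _ (by
        rcases h with h | h
        · right; right; left; omega
        · right; right; right; omega)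
  · -- chirality 2 : steps in +e₂ direction
    have hfwd : (∀ k : ℕ, ((x.1, x.2 + (k : ℤ) + 1) : Site) ∉ innerDom M₀) → u x 2 = 0 := by
      intro hc
      refine ray_vanish u _ _ hinjp2 (by simp) fun k => ⟨z, hz, ?_⟩
      beta_reduce
      push_cast
      rw [← add_assoc]
      exact h2 (x.1, x.2 + (k : ℤ)) (hc k)
    rcases hx with h | h
    · exact hfwd fun k => not_inner_of _ (by
        rcases h with h | h
        · left; omega
        · right; left; omega)
    · rcases h with h | h
      · exact hfwd fun k => not_inner_of _ (by right; right; left; omega)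
      · -- x.2 ≤ -(M₀+2) : backward ray
        refine ray_vanish u _ _ hinjm2 (by simp) fun k => ⟨z⁻¹, hziv, ?_⟩
        beta_reduce
        push_cast
        have hstep := h2 (x.1, x.2 - ((k : ℤ) + 1)) (not_inner_of _ (by
          right; right; right; omega))
        rw [show x.2 - ((k : ℤ) + 1) + 1 = x.2 - (k : ℤ) from by ring] at hstep
        rw [hstep, inv_mul_cancel_left₀ hz0]
  · -- chirality 3 : steps in -e₂ direction
    have hfwd : (∀ k : ℕ, ((x.1, x.2 - (k : ℤ) - 1) : Site) ∉ innerDom M₀) → u x 3 = 0 := by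
      intro hc
      refine ray_vanish u _ _ hinjm2 (by simp) fun k => ⟨z, hz, ?_⟩
      beta_reduce
      push_cast
      rw [show x.2 - ((k : ℤ) + 1) = x.2 - (k : ℤ) - 1 from by ring]
      exact h3 (x.1, x.2 - (k : ℤ)) (hc k)
    rcases hx with h | h
    · exact hfwd fun k => not_inner_of _ (by
        rcases h with h | h
        · left; omega
        · right; left; omega)
    · rcases h with h | h
      · -- x.2 ≥ M₀+2 : backward ray
        refine ray_vanish u _ _ hinjp2 (by simp) fun k => ⟨z⁻¹, hziv, ?_⟩
        beta_reduce
        push_cast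
        have hstep := h3 (x.1, x.2 + ((k : ℤ) + 1)) (not_inner_of _ (by
          right; right; left; omega))
        rw [show x.2 + ((k : ℤ) + 1) - 1 = x.2 + (k : ℤ) from by ring] at hstep
        rw [hstep, inv_mul_cancel_left₀ hz0]
      · exact hfwd fun k => not_inner_of _ (by right; right; right; omega)

/-- A single-site state in the identity-coin region, used for Weyl sequences. -/
def sSig (M₀ : ℤ) (k : ℤ) (c : ℂ) : H :=
  lp.single 2 ((k, M₀ + 1) : Site) (EuclideanSpace.single (1 : Chir) c)

lemma sSig_apply (M₀ k : ℤ) (c : ℂ) (y : Site) :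
    (sSig M₀ k c) y = if y = ((k, M₀ + 1) : Site) then EuclideanSpace.single (1 : Chir) c
      else 0 := by
  by_cases h : y = ((k, M₀ + 1) : Site)
  · rw [if_pos h]; subst h; exact lp.single_apply_self 2 _ _
  · rw [if_neg h]; exact lp.single_apply_ne 2 _ _ h

lemma sSig_norm (M₀ k : ℤ) (c : ℂ) : ‖sSig M₀ k c‖ = ‖c‖ := by
  have h := lp.norm_single (p := 2) (E := fun _ : Site => V) (by norm_num)
    ((k, M₀ + 1) : Site) (EuclideanSpace.single (1 : Chir) c)
  exact h.trans (EuclideanSpace.norm_single _ _)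

lemma sSig_smul (M₀ k : ℤ) (a c : ℂ) : sSig M₀ k (a * c) = a • sSig M₀ k c := by
  have h : EuclideanSpace.single (1 : Chir) (a * c)
      = a • EuclideanSpace.single (1 : Chir) c := by
    ext j
    simp [EuclideanSpace.single_apply, mul_ite]
  rw [sSig, h, lp.single_smul]
  rfl

lemma walk_single (hA1 : SatisfiesA1 C M₀) (hS : IsShiftOp S) (hCop : IsCoinOp Cop C)
    (k : ℤ) (c : ℂ) : (S.comp Cop) (sSig M₀ k c) = sSig M₀ (k + 1) c := by
  have hnot : ((k, M₀ + 1) : Site) ∉ innerDom M₀ := not_inner_of _ (by right; right; left; omega)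
  have hcoin : Cop (sSig M₀ k c) = sSig M₀ k c := by
    apply lp.ext
    funext y
    ext i
    rw [show (⇑(Cop (sSig M₀ k c)) : ∀ _ : Site, V) y i = (Cop (sSig M₀ k c)) y i from rfl,
      hCop (sSig M₀ k c) y i]
    by_cases h : y = ((k, M₀ + 1) : Site)
    · subst h
      rw [hA1.2 _ hnot]
      simp [Matrix.one_apply, ite_mul, sSig_apply]
    · simp [sSig_apply, h]
  rw [ContinuousLinearMap.comp_apply, hcoin]
  apply lp.ext
  funext x
  obtain ⟨e0, e1, e2, e3⟩ := hS (sSig M₀ k c) x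
  ext i
  fin_cases i
  · show (S (sSig M₀ k c)) x (0 : Chir) = (sSig M₀ (k + 1) c) x (0 : Chir)
    rw [e0]
    rw [sSig_apply, sSig_apply]
    by_cases h1 : ((x.1 + 1, x.2) : Site) = ((k, M₀ + 1) : Site) <;>
      by_cases h2 : x = (((k + 1 : ℤ), M₀ + 1) : Site) <;>
      simp [h1, h2, EuclideanSpace.single_apply,
        apply_ite (fun v : V => v (0 : Chir))]
  · show (S (sSig M₀ k c)) x (1 : Chir) = (sSig M₀ (k + 1) c) x (1 : Chir)
    rw [e1]
    rw [sSig_apply, sSig_apply]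
    have hiff : (((x.1 - 1, x.2) : Site) = ((k, M₀ + 1) : Site))
        ↔ x = (((k + 1 : ℤ), M₀ + 1) : Site) := by
      simp only [Prod.ext_iff]
      constructor <;> (intro ⟨a, b⟩; exact ⟨by omega, by omega⟩)
    by_cases h1 : x = (((k + 1 : ℤ), M₀ + 1) : Site)
    · rw [if_pos (hiff.mpr h1), if_pos h1]
    · rw [if_neg (fun hc => h1 (hiff.mp hc)), if_neg h1]
  · show (S (sSig M₀ k c)) x (2 : Chir) = (sSig M₀ (k + 1) c) x (2 : Chir)
    rw [e2]
    rw [sSig_apply, sSig_apply]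
    by_cases h1 : ((x.1, x.2 + 1) : Site) = ((k, M₀ + 1) : Site) <;>
      by_cases h2 : x = (((k + 1 : ℤ), M₀ + 1) : Site) <;>
      simp [h1, h2, EuclideanSpace.single_apply,
        apply_ite (fun v : V => v (2 : Chir))]
  · show (S (sSig M₀ k c)) x (3 : Chir) = (sSig M₀ (k + 1) c) x (3 : Chir)
    rw [e3]
    rw [sSig_apply, sSig_apply]
    by_cases h1 : ((x.1, x.2 - 1) : Site) = ((k, M₀ + 1) : Site) <;>
      by_cases h2 : x = (((k + 1 : ℤ), M₀ + 1) : Site) <;>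
      simp [h1, h2, EuclideanSpace.single_apply,
        apply_ite (fun v : V => v (3 : Chir))]

lemma circle_subset_spectrum (hA1 : SatisfiesA1 C M₀) (hS : IsShiftOp S)
    (hCop : IsCoinOp Cop C) :
    ∀ w : ℂ, ‖w‖ = 1 → w ∈ spectrum ℂ (S.comp Cop) := by
  intro w hw
  by_contra hns
  rw [spectrum.mem_iff, not_not] at hns
  obtain ⟨t, ht⟩ := hns
  have hw0 : w ≠ 0 := by
    intro h; rw [h] at hw; simp at hw
  set b : ℂ := w⁻¹ with hbdef
  have hb0 : b ≠ 0 := inv_ne_zero hw0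
  have hb1 : ‖b‖ = 1 := by rw [hbdef, norm_inv, hw]; norm_num
  set R : ℝ := ‖((t⁻¹ : (H →L[ℂ] H)ˣ) : H →L[ℂ] H)‖ * 2 with hRdef
  set n : ℕ := Nat.floor (R ^ (2 : ℝ)) + 1 with hndef
  set f : ℕ → H := fun j => sSig M₀ (j : ℤ) (b ^ ((j : ℤ) - 1)) with hfdef
  set un : H := ∑ j ∈ Finset.range n, sSig M₀ (j : ℤ) (b ^ (j : ℤ)) with hundef
  -- the approximate eigenvalue equation
  have hdiff : (S.comp Cop) un - w • un = f n - f 0 := by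
    rw [hundef, map_sum, Finset.smul_sum, ← Finset.sum_sub_distrib,
      ← Finset.sum_range_sub f n]
    refine Finset.sum_congr rfl fun j _ => ?_
    rw [walk_single hA1 hS hCop]
    have hL : sSig M₀ ((j : ℤ) + 1) (b ^ (j : ℤ)) = f (j + 1) := by
      simp only [hfdef]
      have h1 : ((j + 1 : ℕ) : ℤ) = (j : ℤ) + 1 := by push_cast; ring
      rw [h1, add_sub_cancel_right]
    have hR : w • sSig M₀ (j : ℤ) (b ^ (j : ℤ)) = f j := by
      simp only [hfdef]
      rw [← sSig_smul]
      congr 1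
      rw [zpow_sub₀ hb0, zpow_one, hbdef]
      field_simp
    rw [hL, hR]
  -- norm of the defect
  have hfn : ∀ j : ℕ, ‖f j‖ = 1 := by
    intro j
    simp only [hfdef]
    rw [sSig_norm, norm_zpow, hb1, one_zpow]
  have hdefect : ‖(S.comp Cop) un - w • un‖ ≤ 2 := by
    rw [hdiff]
    calc ‖f n - f 0‖ ≤ ‖f n‖ + ‖f 0‖ := norm_sub_le _ _
      _ = 2 := by rw [hfn, hfn]; norm_num
  -- norm of un
  have hinj : Function.Injective (fun j : ℕ => (((j : ℤ), M₀ + 1) : Site)) := by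
    intro a b hab
    simp only [Prod.mk.injEq] at hab
    omega
  have hun_norm : ‖un‖ ^ (2 : ENNReal).toReal = (n : ℝ) := by
    have himg : un = ∑ y ∈ (Finset.range n).image (fun j : ℕ => (((j : ℤ), M₀ + 1) : Site)),
        lp.single 2 y (EuclideanSpace.single (1 : Chir) (b ^ y.1)) := by
      rw [Finset.sum_image (fun a _ b _ h => hinj h)]
      rfl
    rw [himg, lp.norm_sum_single (by norm_num)
      (fun y : Site => EuclideanSpace.single (1 : Chir) (b ^ y.1))]
    have hval : ∀ y ∈ (Finset.range n).image (fun j : ℕ => (((j : ℤ), M₀ + 1) : Site)),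
        ‖EuclideanSpace.single (1 : Chir) (b ^ y.1)‖ ^ (2 : ENNReal).toReal = 1 := by
      intro y _
      rw [EuclideanSpace.norm_single, norm_zpow, hb1, one_zpow, Real.one_rpow]
    rw [Finset.sum_congr rfl hval, Finset.sum_const, Finset.card_image_of_injective _ hinj,
      Finset.card_range, nsmul_eq_mul, mul_one]
  -- invertibility bound
  have hmul : ((t⁻¹ : (H →L[ℂ] H)ˣ) : H →L[ℂ] H) * ((t : (H →L[ℂ] H)ˣ) : H →L[ℂ] H) = 1 :=
    t.inv_mul
  have hun_eq : un = ((t⁻¹ : (H →L[ℂ] H)ˣ) : H →L[ℂ] H) (((t : (H →L[ℂ] H)ˣ) : H →L[ℂ] H) un) := by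
    rw [← ContinuousLinearMap.mul_apply, hmul, ContinuousLinearMap.one_apply]
  have ht_apply : ((t : (H →L[ℂ] H)ˣ) : H →L[ℂ] H) un = w • un - (S.comp Cop) un := by
    rw [ht, Algebra.algebraMap_eq_smul_one, ContinuousLinearMap.sub_apply,
      ContinuousLinearMap.smul_apply, ContinuousLinearMap.one_apply]
  have hbound : ‖un‖ ≤ R := by
    rw [hun_eq, ht_apply]
    calc ‖((t⁻¹ : (H →L[ℂ] H)ˣ) : H →L[ℂ] H) (w • un - (S.comp Cop) un)‖
        ≤ ‖((t⁻¹ : (H →L[ℂ] H)ˣ) : H →L[ℂ] H)‖ * ‖w • un - (S.comp Cop) un‖ :=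
          ContinuousLinearMap.le_opNorm _ _
      _ ≤ ‖((t⁻¹ : (H →L[ℂ] H)ˣ) : H →L[ℂ] H)‖ * 2 := by
          refine mul_le_mul_of_nonneg_left ?_ (norm_nonneg _)
          rw [norm_sub_rev]
          exact hdefect
      _ = R := by rw [hRdef]
  have hfinal : (n : ℝ) ≤ R ^ (2 : ℝ) := by
    rw [← hun_norm]
    exact Real.rpow_le_rpow (norm_nonneg _) hbound ENNReal.toReal_nonneg
  have hlt : R ^ (2 : ℝ) < (n : ℝ) := by
    rw [hndef]
    push_cast
    exact Nat.lt_floor_add_one _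
  linarith

end AuxSpectrum

/-- Under (A-1), the spectrum of `U = SC` equals the unit circle, and every
eigenvalue of `U` lies on the unit circle and has finite-dimensional eigenspace. -/
theorem perturbed_walk_spectrum
    (M₀ : ℤ) (C : Site → Matrix Chir Chir ℂ)
    (hC : IsUnitaryCoin C) (hA1 : SatisfiesA1 C M₀)
    (S Cop : H →L[ℂ] H) (hS : IsShiftOp S) (hCop : IsCoinOp Cop C)
    (hUnit : S.comp Cop ∈ unitary (H →L[ℂ] H)) :
    spectrum ℂ (S.comp Cop) = {z : ℂ | ‖z‖ = 1} ∧
    ∀ z : ℂ, (∃ u : H, u ≠ 0 ∧ (S.comp Cop) u = z • u) →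
      ‖z‖ = 1 ∧
      FiniteDimensional ℂ (Module.End.eigenspace (↑(S.comp Cop) : H →ₗ[ℂ] H) z) := by
  constructor
  · ext w
    constructor
    · intro hw
      have h := spectrum.subset_circle_of_unitary hUnit hw
      rwa [Metric.mem_sphere, dist_zero_right] at h
    · intro hw
      exact circle_subset_spectrum hA1 hS hCop w hw
  · rintro z ⟨u, hu0, huz⟩
    have hz1 : ‖z‖ = 1 := by
      have hnm : ‖(S.comp Cop) u‖ = ‖u‖ :=
        ContinuousLinearMap.norm_map_of_mem_unitary hUnit u
      rw [huz, norm_smul] at hnm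
      have hune : ‖u‖ ≠ 0 := norm_ne_zero_iff.mpr hu0
      field_simp at hnm
      tauto
    refine ⟨hz1, ?_⟩
    set Ez := Module.End.eigenspace (↑(S.comp Cop) : H →ₗ[ℂ] H) z with hEz
    set box : Finset Site :=
      Finset.Icc (-(M₀ + 1)) (M₀ + 1) ×ˢ Finset.Icc (-(M₀ + 1)) (M₀ + 1) with hbox
    let ev : Site → (H →ₗ[ℂ] V) := fun y =>
      { toFun := fun v => v y
        map_add' := fun v w => congrFun (lp.coeFn_add v w) y
        map_smul' := fun c v => congrFun (lp.coeFn_smul c v) y }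
    let Φ : Ez →ₗ[ℂ] ({y // y ∈ box} → V) :=
      LinearMap.pi (fun y : {y // y ∈ box} => (ev y.1).comp Ez.subtype)
    have hinj : Function.Injective Φ := by
      rw [injective_iff_map_eq_zero]
      intro v hv
      have hveig : (S.comp Cop) (v : H) = z • (v : H) :=
        Module.End.mem_eigenspace_iff.mp v.2
      have hvH : ∀ (x : Site) (i : Chir), (v : H) x i = 0 := by
        intro x i
        by_cases hx : M₀ + 2 ≤ |x.1| ∨ M₀ + 2 ≤ |x.2|
        · exact eigen_support hA1 hS hCop hz1 hveig x i hx
        · push_neg at hx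
          obtain ⟨ha, hb⟩ := hx
          rw [abs_lt] at ha hb
          have hxbox : x ∈ box := by
            rw [hbox, Finset.mem_product, Finset.mem_Icc, Finset.mem_Icc]
            refine ⟨⟨?_, ?_⟩, ?_, ?_⟩ <;> omega
          have h3 := congrFun hv (⟨x, hxbox⟩ : {y // y ∈ box})
          have h4 : (v : H) x = (0 : V) := h3
          exact congrArg (fun w : V => w i) h4
      have hv0 : (v : H) = 0 := by
        apply lp.ext
        rw [lp.coeFn_zero]
        funext x
        ext i
        exact hvH x i
      exact Subtype.ext hv0
    exact FiniteDimensional.of_injective Φ hinj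

end QWPaper
end
end

section
/- Assume (A-1). Let κ ∈ ℂ with Im κ < 0 and θ ∈ ℂ with Im θ < Im κ. Then e^{−iκ} is an eigenvalue of U(θ) if and only if there exists a nonzero outgoing map u : ℤ² → ℂ⁴ satisfying Uu = e^{−iκ}u pointwise. Moreover, for any such outgoing solution u the sequences a_←, a_→, a_↓, a_↑ are supported in {−M₀, −M₀+1, …, M₀}, and a pointwise solution u of Uu = e^{−iκ}u is outgoing if and only if the map x ↦ D_x(θ)u(x) belongs to H. -/
noncomputable section

namespace QWPaper

open Complex

section Aux

/-- Diagonal entries of `Dmat`. -/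
def dd (θ : ℂ) (x : Site) : Chir → ℂ :=
  ![Complex.exp (Complex.I * θ * x.1), Complex.exp (-(Complex.I * θ * x.1)),
    Complex.exp (Complex.I * θ * x.2), Complex.exp (-(Complex.I * θ * x.2))]

lemma Dmat_eq (θ : ℂ) (x : Site) : Dmat θ x = Matrix.diagonal (dd θ x) := rfl

lemma dd_ne_zero (θ : ℂ) (x : Site) (i : Chir) : dd θ x i ≠ 0 := by
  fin_cases i <;> simp [dd] <;> exact Complex.exp_ne_zero _

lemma mulVec_Dmat (θ : ℂ) (x : Site) (w : Chir → ℂ) (i : Chir) :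
    (Dmat θ x).mulVec w i = dd θ x i * w i := by
  rw [Dmat_eq]; exact Matrix.mulVec_diagonal _ _ _

lemma ptCoin_one {C : Site → Matrix Chir Chir ℂ} {u : Site → Chir → ℂ} {y : Site}
    (h : C y = 1) (i : Chir) : ptCoin C u y i = u y i := by
  simp [ptCoin, h, Matrix.one_apply]

lemma coin_one {C : Site → Matrix Chir Chir ℂ} {M₀ : ℤ} (hA1 : SatisfiesA1 C M₀)
    (y : Site) (h : M₀ < |y.1| ∨ M₀ < |y.2|) : C y = 1 := by
  refine hA1.2 y ?_
  simp only [innerDom, Set.mem_setOf_eq]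
  omega

lemma coin_one' {C : Site → Matrix Chir Chir ℂ} {M₀ : ℤ} (hA1 : SatisfiesA1 C M₀)
    (a b : ℤ) (h : M₀ < |a| ∨ M₀ < |b|) : C (a, b) = 1 :=
  coin_one hA1 (a, b) h

lemma norm_sq_V (v : V) : ‖v‖ ^ (2 : ENNReal).toReal = ∑ i : Chir, ‖v i‖ ^ 2 := by
  rw [show ((2 : ENNReal).toReal) = ((2 : ℕ) : ℝ) by simp, Real.rpow_natCast,
    EuclideanSpace.norm_eq, Real.sq_sqrt (by positivity)]

lemma bound_of_mem {θ : ℂ} {u : Site → Chir → ℂ}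
    (hmem : Memℓp (fun x : Site => (WithLp.toLp 2 ((Dmat θ x).mulVec (u x)) : V)) 2) :
    ∃ T : ℝ, ∀ (x : Site) (i : Chir), ‖dd θ x i * u x i‖ ^ 2 ≤ T := by
  have hsum := (memℓp_gen_iff (p := 2) (by norm_num)).mp hmem
  refine ⟨_, fun x i => le_trans ?_ (hsum.le_tsum x (fun _ _ => by positivity))⟩
  rw [show ((2 : ENNReal).toReal) = ((2 : ℕ) : ℝ) by simp, Real.rpow_natCast]
  refine pow_le_pow_left₀ (norm_nonneg _) ?_ 2
  have h1 := PiLp.norm_apply_le (WithLp.toLp 2 ((Dmat θ x).mulVec (u x)) : V) i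
  simp only [WithLp.ofLp_toLp, mulVec_Dmat] at h1
  exact h1

lemma memPi_of_comps {θ : ℂ} {u : Site → Chir → ℂ}
    (h : Summable (fun x : Site => ∑ i : Chir, ‖dd θ x i * u x i‖ ^ 2)) :
    Memℓp (fun x : Site => (WithLp.toLp 2 ((Dmat θ x).mulVec (u x)) : V)) 2 := by
  apply memℓp_gen
  refine Summable.of_nonneg_of_le (fun x => by positivity) (fun x => ?_) h
  rw [show ((2 : ENNReal).toReal) = ((2 : ℕ) : ℝ) by simp, Real.rpow_natCast]
  have hsup : ‖(WithLp.toLp 2 ((Dmat θ x).mulVec (u x)) : V)‖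
      ≤ Real.sqrt (∑ i : Chir, ‖dd θ x i * u x i‖ ^ 2) := by
    rw [EuclideanSpace.norm_eq]
    simp only [WithLp.ofLp_toLp, mulVec_Dmat]
    exact le_refl _
  calc ‖(WithLp.toLp 2 ((Dmat θ x).mulVec (u x)) : V)‖ ^ 2
      ≤ Real.sqrt (∑ i : Chir, ‖dd θ x i * u x i‖ ^ 2) ^ 2 :=
        pow_le_pow_left₀ (norm_nonneg _) hsup 2
    _ = ∑ i : Chir, ‖dd θ x i * u x i‖ ^ 2 := Real.sq_sqrt (by positivity)

lemma mem_lp_V {f : Site → V} (h : Summable fun x : Site => ∑ i : Chir, ‖f x i‖ ^ 2) :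
    Memℓp f 2 := by
  apply memℓp_gen
  exact (summable_congr (fun x => norm_sq_V (f x))).mpr h

lemma bound_of_mem_H {f : Site → V} (hf : Memℓp f 2) :
    ∃ T : ℝ, ∀ (x : Site) (i : Chir), ‖f x i‖ ^ 2 ≤ T := by
  have hsum := (memℓp_gen_iff (p := 2) (by norm_num)).mp hf
  refine ⟨_, fun x i => le_trans ?_ (hsum.le_tsum x (fun _ _ => by positivity))⟩
  rw [norm_sq_V]
  exact Finset.single_le_sum (f := fun j : Chir => ‖f x j‖ ^ 2)
    (fun j _ => by positivity) (Finset.mem_univ i)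

lemma summable_tail_int (β : ℝ) (hβ : 0 < β) (M : ℤ) (hM : 0 ≤ M) :
    Summable (fun m : ℤ => if m < -M then Real.exp (2 * β * m) else 0) := by
  apply Summable.of_nat_of_neg
  · have : (fun n : ℕ => if ((n : ℤ)) < -M then Real.exp (2 * β * (n : ℤ)) else 0)
        = fun _ => (0 : ℝ) := by
      funext n; rw [if_neg (by omega)]
    rw [this]; exact summable_zero
  · refine Summable.of_nonneg_of_le (fun n => by positivity) (fun n => ?_)
      (summable_geometric_of_lt_one (le_of_lt (Real.exp_pos _))
        (Real.exp_lt_one_iff.mpr (by linarith : -(2 * β) < 0)))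
    by_cases h : ((-(n : ℤ) : ℤ)) < -M
    · rw [if_pos h, ← Real.exp_nat_mul]
      apply le_of_eq; congr 1; push_cast; ring
    · rw [if_neg h]; positivity

lemma summable_dominated (M : ℤ) (hM : 1 ≤ M) (β : ℝ) (hβ : 0 < β) (a : ℤ → ℂ)
    (F : Site → ℝ) (hF0 : ∀ x, 0 ≤ F x)
    (hz : ∀ x : Site, (M < x.1 ∨ M < |x.2|) → F x = 0)
    (ht : ∀ x : Site, x.1 < -M → |x.2| ≤ M → F x = ‖a x.2‖ ^ 2 * Real.exp (2 * β * x.1)) :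
    Summable F := by
  set P1 : Site → ℝ := fun x =>
    if x.1 ∈ Finset.Icc (-M) M ∧ x.2 ∈ Finset.Icc (-M) M then F x else 0 with hP1def
  set P2 : Site → ℝ := fun x =>
    (if x.1 < -M then Real.exp (2 * β * x.1) else 0) *
      (if |x.2| ≤ M then ‖a x.2‖ ^ 2 else 0) with hP2def
  have hP1 : Summable P1 := by
    apply summable_of_ne_finset_zero (s := Finset.Icc (-M) M ×ˢ Finset.Icc (-M) M)
    intro x hx
    have hnot : ¬(x.1 ∈ Finset.Icc (-M) M ∧ x.2 ∈ Finset.Icc (-M) M) := by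
      intro h; exact hx (Finset.mem_product.mpr ⟨h.1, h.2⟩)
    simp only [hP1def, if_neg hnot]
  have hP2 : Summable P2 := by
    apply Summable.mul_of_nonneg (summable_tail_int β hβ M (by omega))
      (g := fun n : ℤ => if |n| ≤ M then ‖a n‖ ^ 2 else 0)
    · apply summable_of_ne_finset_zero (s := Finset.Icc (-M) M)
      intro n hn
      rw [if_neg]
      intro h
      exact hn (Finset.mem_Icc.mpr (abs_le.mp h))
    · intro n; positivity
    · intro n; positivity
  have hP1n : ∀ x, 0 ≤ P1 x := by
    intro x; simp only [hP1def]; split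
    · exact hF0 x
    · exact le_refl 0
  have hP2n : ∀ x, 0 ≤ P2 x := by
    intro x; simp only [hP2def]
    apply mul_nonneg
    · split
      · positivity
      · exact le_refl 0
    · split
      · positivity
      · exact le_refl 0
  refine Summable.of_nonneg_of_le hF0 (fun x => ?_) (hP1.add hP2)
  rcases lt_or_ge M x.1 with h1 | h1
  · rw [hz x (Or.inl h1)]; exact add_nonneg (hP1n x) (hP2n x)
  rcases lt_or_ge M |x.2| with h2 | h2
  · rw [hz x (Or.inr h2)]; exact add_nonneg (hP1n x) (hP2n x)
  rcases lt_or_ge x.1 (-M) with h3 | h3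
  · have hF : F x = P2 x := by
      simp only [hP2def]
      rw [if_pos h3, if_pos h2, ht x h3 h2]; ring
    rw [hF]
    exact le_add_of_nonneg_left (hP1n x)
  · have hF : F x = P1 x := by
      simp only [hP1def]
      rw [if_pos ⟨Finset.mem_Icc.mpr ⟨h3, h1⟩, Finset.mem_Icc.mpr (abs_le.mp h2)⟩]
    rw [hF]
    exact le_add_of_nonneg_right (hP2n x)

section Sol

variable {M₀ : ℤ} {C : Site → Matrix Chir Chir ℂ} {κ : ℂ} {u : Site → Chir → ℂ}

local notation "E" => Complex.exp (-(Complex.I * κ))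

lemma ptWalk0 (x : Site) : ptWalk C u x 0 = ptCoin C u (x.1 + 1, x.2) 0 := rfl
lemma ptWalk1 (x : Site) : ptWalk C u x 1 = ptCoin C u (x.1 - 1, x.2) 1 := rfl
lemma ptWalk2 (x : Site) : ptWalk C u x 2 = ptCoin C u (x.1, x.2 + 1) 2 := rfl
lemma ptWalk3 (x : Site) : ptWalk C u x 3 = ptCoin C u (x.1, x.2 - 1) 3 := rfl

lemma step0 (hu : IsPtSolution C κ u) (x : Site) (h : C (x.1 + 1, x.2) = 1) :
    u (x.1 + 1, x.2) 0 = E * u x 0 := by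
  have h0 := hu x 0
  rwa [ptWalk0, ptCoin_one h] at h0

lemma step1 (hu : IsPtSolution C κ u) (x : Site) (h : C (x.1 - 1, x.2) = 1) :
    u (x.1 - 1, x.2) 1 = E * u x 1 := by
  have h0 := hu x 1
  rwa [ptWalk1, ptCoin_one h] at h0

lemma step2 (hu : IsPtSolution C κ u) (x : Site) (h : C (x.1, x.2 + 1) = 1) :
    u (x.1, x.2 + 1) 2 = E * u x 2 := by
  have h0 := hu x 2
  rwa [ptWalk2, ptCoin_one h] at h0

lemma step3 (hu : IsPtSolution C κ u) (x : Site) (h : C (x.1, x.2 - 1) = 1) :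
    u (x.1, x.2 - 1) 3 = E * u x 3 := by
  have h0 := hu x 3
  rwa [ptWalk3, ptCoin_one h] at h0

lemma iter0 (hu : IsPtSolution C κ u) (x : Site) (k : ℕ)
    (h : ∀ m : ℤ, x.1 < m → m ≤ x.1 + k → C (m, x.2) = 1) :
    u (x.1 + k, x.2) 0 = E ^ k * u x 0 := by
  induction k with
  | zero => simp
  | succ k ih =>
    have h1 : C (x.1 + k + 1, x.2) = 1 := h _ (by omega) (by push_cast; omega)
    have hstep := step0 hu (x.1 + k, x.2) h1
    have hcast : ((k + 1 : ℕ) : ℤ) = (k : ℤ) + 1 := by push_cast; ring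
    rw [hcast, ← add_assoc, hstep, ih (fun m h1 h2 => h m h1 (by push_cast; omega)),
      pow_succ]
    ring

lemma iter1 (hu : IsPtSolution C κ u) (x : Site) (k : ℕ)
    (h : ∀ m : ℤ, x.1 - k ≤ m → m < x.1 → C (m, x.2) = 1) :
    u (x.1 - k, x.2) 1 = E ^ k * u x 1 := by
  induction k with
  | zero => simp
  | succ k ih =>
    have h1 : C (x.1 - k - 1, x.2) = 1 := h _ (by push_cast; omega) (by omega)
    have hstep := step1 hu (x.1 - k, x.2) h1
    have hcast : ((k + 1 : ℕ) : ℤ) = (k : ℤ) + 1 := by push_cast; ring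
    rw [hcast, show x.1 - ((k : ℤ) + 1) = x.1 - k - 1 by ring, hstep,
      ih (fun m h1 h2 => h m (by push_cast; omega) h2), pow_succ]
    ring

lemma iter2 (hu : IsPtSolution C κ u) (x : Site) (k : ℕ)
    (h : ∀ m : ℤ, x.2 < m → m ≤ x.2 + k → C (x.1, m) = 1) :
    u (x.1, x.2 + k) 2 = E ^ k * u x 2 := by
  induction k with
  | zero => simp
  | succ k ih =>
    have h1 : C (x.1, x.2 + k + 1) = 1 := h _ (by omega) (by push_cast; omega)
    have hstep := step2 hu (x.1, x.2 + k) h1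
    have hcast : ((k + 1 : ℕ) : ℤ) = (k : ℤ) + 1 := by push_cast; ring
    rw [hcast, ← add_assoc, hstep, ih (fun m h1 h2 => h m h1 (by push_cast; omega)),
      pow_succ]
    ring

lemma iter3 (hu : IsPtSolution C κ u) (x : Site) (k : ℕ)
    (h : ∀ m : ℤ, x.2 - k ≤ m → m < x.2 → C (x.1, m) = 1) :
    u (x.1, x.2 - k) 3 = E ^ k * u x 3 := by
  induction k with
  | zero => simp
  | succ k ih =>
    have h1 : C (x.1, x.2 - k - 1) = 1 := h _ (by push_cast; omega) (by omega)
    have hstep := step3 hu (x.1, x.2 - k) h1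
    have hcast : ((k + 1 : ℕ) : ℤ) = (k : ℤ) + 1 := by push_cast; ring
    rw [hcast, show x.2 - ((k : ℤ) + 1) = x.2 - k - 1 by ring, hstep,
      ih (fun m h1 h2 => h m (by push_cast; omega) h2), pow_succ]
    ring

lemma zrow0 (hu : IsPtSolution C κ u) (hA1 : SatisfiesA1 C M₀) {n : ℤ} (hn : M₀ < |n|)
    (h : ∀ m : ℤ, M₀ < m → u (m, n) 0 = 0) : ∀ m : ℤ, u (m, n) 0 = 0 := by
  intro m
  rcases lt_or_ge M₀ m with hm | hm
  · exact h m hm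
  · set k : ℕ := (M₀ + 1 - m).toNat with hk
    have hkZ : m + (k : ℤ) = M₀ + 1 := by
      rw [hk, Int.toNat_of_nonneg (by omega)]; ring
    have hiter := iter0 hu (m, n) k (fun m' _ _ => coin_one hA1 _ (Or.inr hn))
    simp only [hkZ] at hiter
    have h0 : (0 : ℂ) = E ^ k * u (m, n) 0 := by rw [← hiter]; exact (h _ (by omega)).symm
    have hE : (E : ℂ) ^ k ≠ 0 := pow_ne_zero _ (Complex.exp_ne_zero _)
    field_simp at h0
    exact (mul_eq_zero.mp h0.symm).resolve_left hE

lemma zrow1 (hu : IsPtSolution C κ u) (hA1 : SatisfiesA1 C M₀) {n : ℤ} (hn : M₀ < |n|)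
    (h : ∀ m : ℤ, m < -M₀ → u (m, n) 1 = 0) : ∀ m : ℤ, u (m, n) 1 = 0 := by
  intro m
  rcases lt_or_ge m (-M₀) with hm | hm
  · exact h m hm
  · set k : ℕ := (m + M₀ + 1).toNat with hk
    have hkZ : m - (k : ℤ) = -(M₀ + 1) := by
      rw [hk, Int.toNat_of_nonneg (by omega)]; ring
    have hiter := iter1 hu (m, n) k (fun m' _ _ => coin_one hA1 _ (Or.inr hn))
    simp only [hkZ] at hiter
    have h0 : (0 : ℂ) = E ^ k * u (m, n) 1 := by rw [← hiter]; exact (h _ (by omega)).symm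
    have hE : (E : ℂ) ^ k ≠ 0 := pow_ne_zero _ (Complex.exp_ne_zero _)
    field_simp at h0
    exact (mul_eq_zero.mp h0.symm).resolve_left hE

lemma zcol2 (hu : IsPtSolution C κ u) (hA1 : SatisfiesA1 C M₀) {n : ℤ} (hn : M₀ < |n|)
    (h : ∀ m : ℤ, M₀ < m → u (n, m) 2 = 0) : ∀ m : ℤ, u (n, m) 2 = 0 := by
  intro m
  rcases lt_or_ge M₀ m with hm | hm
  · exact h m hm
  · set k : ℕ := (M₀ + 1 - m).toNat with hk
    have hkZ : m + (k : ℤ) = M₀ + 1 := by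
      rw [hk, Int.toNat_of_nonneg (by omega)]; ring
    have hiter := iter2 hu (n, m) k (fun m' _ _ => coin_one hA1 _ (Or.inl hn))
    simp only [hkZ] at hiter
    have h0 : (0 : ℂ) = E ^ k * u (n, m) 2 := by rw [← hiter]; exact (h _ (by omega)).symm
    have hE : (E : ℂ) ^ k ≠ 0 := pow_ne_zero _ (Complex.exp_ne_zero _)
    field_simp at h0
    exact (mul_eq_zero.mp h0.symm).resolve_left hE

lemma zcol3 (hu : IsPtSolution C κ u) (hA1 : SatisfiesA1 C M₀) {n : ℤ} (hn : M₀ < |n|)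
    (h : ∀ m : ℤ, m < -M₀ → u (n, m) 3 = 0) : ∀ m : ℤ, u (n, m) 3 = 0 := by
  intro m
  rcases lt_or_ge m (-M₀) with hm | hm
  · exact h m hm
  · set k : ℕ := (m + M₀ + 1).toNat with hk
    have hkZ : m - (k : ℤ) = -(M₀ + 1) := by
      rw [hk, Int.toNat_of_nonneg (by omega)]; ring
    have hiter := iter3 hu (n, m) k (fun m' _ _ => coin_one hA1 _ (Or.inl hn))
    simp only [hkZ] at hiter
    have h0 : (0 : ℂ) = E ^ k * u (n, m) 3 := by rw [← hiter]; exact (h _ (by omega)).symm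
    have hE : (E : ℂ) ^ k ≠ 0 := pow_ne_zero _ (Complex.exp_ne_zero _)
    field_simp at h0
    exact (mul_eq_zero.mp h0.symm).resolve_left hE

lemma rad0 (hu : IsPtSolution C κ u) (hA1 : SatisfiesA1 C M₀) :
    ∀ x : Site, x.1 < -M₀ →
      u x 0 = (u (-(M₀ + 1), x.2) 0 * Complex.exp (-(Complex.I * κ * (M₀ + 1)))) *
        Complex.exp (-(Complex.I * κ * x.1)) := by
  intro x hx
  set k : ℕ := (-(M₀ + 1) - x.1).toNat with hk
  have hkZ : x.1 + (k : ℤ) = -(M₀ + 1) := by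
    rw [hk, Int.toNat_of_nonneg (by omega)]; ring
  have hM : 1 ≤ M₀ := hA1.1
  have hcoin : ∀ m : ℤ, x.1 < m → m ≤ x.1 + (k : ℤ) → C (m, x.2) = 1 :=
    fun m h1 h2 => coin_one' hA1 m x.2 (Or.inl (by rw [lt_abs]; omega))
  have hiter := iter0 hu x k hcoin
  rw [hkZ] at hiter
  have hkZ2 : (k : ℤ) = -(M₀ + 1) - x.1 := by omega
  have hkC : ((k : ℕ) : ℂ) = -(((M₀ : ℂ)) + 1) - ((x.1 : ℤ) : ℂ) := by
    exact_mod_cast hkZ2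
  have key : E ^ k * Complex.exp (-(Complex.I * κ * (M₀ + 1))) *
      Complex.exp (-(Complex.I * κ * x.1)) = 1 := by
    rw [← Complex.exp_nat_mul, ← Complex.exp_add, ← Complex.exp_add,
      show ((k : ℕ) : ℂ) * -(Complex.I * κ) + -(Complex.I * κ * (M₀ + 1)) +
        -(Complex.I * κ * x.1) = 0 by rw [hkC]; ring, Complex.exp_zero]
  rw [hiter]
  linear_combination (-(u x 0)) * key

lemma rad1 (hu : IsPtSolution C κ u) (hA1 : SatisfiesA1 C M₀) :
    ∀ x : Site, M₀ < x.1 →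
      u x 1 = (u (M₀ + 1, x.2) 1 * Complex.exp (-(Complex.I * κ * (M₀ + 1)))) *
        Complex.exp (Complex.I * κ * x.1) := by
  intro x hx
  set k : ℕ := (x.1 - (M₀ + 1)).toNat with hk
  have hkZ : x.1 - (k : ℤ) = M₀ + 1 := by
    rw [hk, Int.toNat_of_nonneg (by omega)]; ring
  have hM : 1 ≤ M₀ := hA1.1
  have hcoin : ∀ m : ℤ, x.1 - (k : ℤ) ≤ m → m < x.1 → C (m, x.2) = 1 :=
    fun m h1 h2 => coin_one' hA1 m x.2 (Or.inl (by rw [lt_abs]; omega))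
  have hiter := iter1 hu x k hcoin
  rw [hkZ] at hiter
  have hkZ2 : (k : ℤ) = x.1 - (M₀ + 1) := by omega
  have hkC : ((k : ℕ) : ℂ) = ((x.1 : ℤ) : ℂ) - (((M₀ : ℂ)) + 1) := by
    exact_mod_cast hkZ2
  have key : E ^ k * Complex.exp (-(Complex.I * κ * (M₀ + 1))) *
      Complex.exp (Complex.I * κ * x.1) = 1 := by
    rw [← Complex.exp_nat_mul, ← Complex.exp_add, ← Complex.exp_add,
      show ((k : ℕ) : ℂ) * -(Complex.I * κ) + -(Complex.I * κ * (M₀ + 1)) +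
        Complex.I * κ * x.1 = 0 by rw [hkC]; ring, Complex.exp_zero]
  rw [hiter]
  linear_combination (-(u x 1)) * key

lemma rad2 (hu : IsPtSolution C κ u) (hA1 : SatisfiesA1 C M₀) :
    ∀ x : Site, x.2 < -M₀ →
      u x 2 = (u (x.1, -(M₀ + 1)) 2 * Complex.exp (-(Complex.I * κ * (M₀ + 1)))) *
        Complex.exp (-(Complex.I * κ * x.2)) := by
  intro x hx
  set k : ℕ := (-(M₀ + 1) - x.2).toNat with hk
  have hkZ : x.2 + (k : ℤ) = -(M₀ + 1) := by
    rw [hk, Int.toNat_of_nonneg (by omega)]; ring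
  have hM : 1 ≤ M₀ := hA1.1
  have hcoin : ∀ m : ℤ, x.2 < m → m ≤ x.2 + (k : ℤ) → C (x.1, m) = 1 :=
    fun m h1 h2 => coin_one' hA1 x.1 m (Or.inr (by rw [lt_abs]; omega))
  have hiter := iter2 hu x k hcoin
  rw [hkZ] at hiter
  have hkZ2 : (k : ℤ) = -(M₀ + 1) - x.2 := by omega
  have hkC : ((k : ℕ) : ℂ) = -(((M₀ : ℂ)) + 1) - ((x.2 : ℤ) : ℂ) := by
    exact_mod_cast hkZ2
  have key : E ^ k * Complex.exp (-(Complex.I * κ * (M₀ + 1))) *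
      Complex.exp (-(Complex.I * κ * x.2)) = 1 := by
    rw [← Complex.exp_nat_mul, ← Complex.exp_add, ← Complex.exp_add,
      show ((k : ℕ) : ℂ) * -(Complex.I * κ) + -(Complex.I * κ * (M₀ + 1)) +
        -(Complex.I * κ * x.2) = 0 by rw [hkC]; ring, Complex.exp_zero]
  rw [hiter]
  linear_combination (-(u x 2)) * key

lemma rad3 (hu : IsPtSolution C κ u) (hA1 : SatisfiesA1 C M₀) :
    ∀ x : Site, M₀ < x.2 →
      u x 3 = (u (x.1, M₀ + 1) 3 * Complex.exp (-(Complex.I * κ * (M₀ + 1)))) *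
        Complex.exp (Complex.I * κ * x.2) := by
  intro x hx
  set k : ℕ := (x.2 - (M₀ + 1)).toNat with hk
  have hkZ : x.2 - (k : ℤ) = M₀ + 1 := by
    rw [hk, Int.toNat_of_nonneg (by omega)]; ring
  have hM : 1 ≤ M₀ := hA1.1
  have hcoin : ∀ m : ℤ, x.2 - (k : ℤ) ≤ m → m < x.2 → C (x.1, m) = 1 :=
    fun m h1 h2 => coin_one' hA1 x.1 m (Or.inr (by rw [lt_abs]; omega))
  have hiter := iter3 hu x k hcoin
  rw [hkZ] at hiter
  have hkZ2 : (k : ℤ) = x.2 - (M₀ + 1) := by omega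
  have hkC : ((k : ℕ) : ℂ) = ((x.2 : ℤ) : ℂ) - (((M₀ : ℂ)) + 1) := by
    exact_mod_cast hkZ2
  have key : E ^ k * Complex.exp (-(Complex.I * κ * (M₀ + 1))) *
      Complex.exp (Complex.I * κ * x.2) = 1 := by
    rw [← Complex.exp_nat_mul, ← Complex.exp_add, ← Complex.exp_add,
      show ((k : ℕ) : ℂ) * -(Complex.I * κ) + -(Complex.I * κ * (M₀ + 1)) +
        Complex.I * κ * x.2 = 0 by rw [hkC]; ring, Complex.exp_zero]
  rw [hiter]
  linear_combination (-(u x 3)) * key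

lemma norm_exp' (z : ℂ) : ‖Complex.exp z‖ = Real.exp z.re := by
  rw [Complex.norm_exp]

lemma dd0 (θ : ℂ) (x : Site) : dd θ x 0 = Complex.exp (Complex.I * θ * x.1) := rfl
lemma dd1 (θ : ℂ) (x : Site) : dd θ x 1 = Complex.exp (-(Complex.I * θ * x.1)) := rfl
lemma dd2 (θ : ℂ) (x : Site) : dd θ x 2 = Complex.exp (Complex.I * θ * x.2) := rfl
lemma dd3 (θ : ℂ) (x : Site) : dd θ x 3 = Complex.exp (-(Complex.I * θ * x.2)) := rfl

lemma contra_growth {ρ c T : ℝ} (hρ : 1 < ρ) (hc : 0 < c)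
    (h : ∀ k : ℕ, (ρ ^ k * c) ^ 2 ≤ T) : False := by
  have hρ2 : 1 < ρ ^ 2 := by nlinarith
  obtain ⟨k, hk⟩ := pow_unbounded_of_one_lt (T / c ^ 2) hρ2
  have h1 := h k
  have h2 : (ρ ^ k * c) ^ 2 = (ρ ^ 2) ^ k * c ^ 2 := by
    rw [mul_pow, ← pow_mul, ← pow_mul, Nat.mul_comm]
  have h3 : T < (ρ ^ 2) ^ k * c ^ 2 := (div_lt_iff₀ (by positivity)).mp hk
  rw [h2] at h1
  linarith

lemma vanish0 {θ : ℂ} (hu : IsPtSolution C κ u) (hA1 : SatisfiesA1 C M₀)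
    (hβ : θ.im < κ.im) {T : ℝ} (hb : ∀ (x : Site) (i : Chir), ‖dd θ x i * u x i‖ ^ 2 ≤ T) :
    ∀ x : Site, M₀ < x.1 → u x 0 = 0 := by
  intro x hx
  by_contra hne
  have hM := hA1.1
  have hgrow : ∀ k : ℕ, Real.exp (κ.im - θ.im) ^ k * ‖dd θ x 0 * u x 0‖ =
      ‖dd θ (x.1 + (k : ℤ), x.2) 0 * u (x.1 + (k : ℤ), x.2) 0‖ := by
    intro k
    have hcoin : ∀ m : ℤ, x.1 < m → m ≤ x.1 + (k : ℤ) → C (m, x.2) = 1 :=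
      fun m h1 h2 => coin_one' hA1 m x.2 (Or.inl (by rw [lt_abs]; omega))
    have hiter := iter0 hu x k hcoin
    rw [hiter]
    have hdd : dd θ (x.1 + (k : ℤ), x.2) 0 = Complex.exp (Complex.I * θ * k) * dd θ x 0 := by
      rw [dd0, dd0, ← Complex.exp_add]; congr 1; push_cast; ring
    rw [hdd, show Complex.exp (Complex.I * θ * (k : ℕ)) * dd θ x 0 * (E ^ k * u x 0)
        = (Complex.exp (Complex.I * θ * (k : ℕ)) * E ^ k) * (dd θ x 0 * u x 0) by ring]
    have hnorm : ‖Complex.exp (Complex.I * θ * (k : ℕ)) * E ^ k‖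
        = Real.exp (κ.im - θ.im) ^ k := by
      rw [← Complex.exp_nat_mul, ← Complex.exp_add, norm_exp', ← Real.exp_nat_mul]
      have hre : (Complex.I * θ * (k : ℕ) + (k : ℕ) * -(Complex.I * κ)).re
          = (k : ℕ) * (κ.im - θ.im) := by
        simp [Complex.mul_re, Complex.mul_im]
        ring
      rw [hre]
    conv_rhs => rw [norm_mul]
    rw [hnorm]
  have hcpos : 0 < ‖dd θ x 0 * u x 0‖ :=
    norm_pos_iff.mpr (mul_ne_zero (dd_ne_zero θ x 0) hne)
  refine contra_growth (T := T) (Real.one_lt_exp_iff.mpr (by linarith : (0:ℝ) < κ.im - θ.im))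
    hcpos (fun k => ?_)
  rw [hgrow k]
  exact hb _ 0

lemma vanish1 {θ : ℂ} (hu : IsPtSolution C κ u) (hA1 : SatisfiesA1 C M₀)
    (hβ : θ.im < κ.im) {T : ℝ} (hb : ∀ (x : Site) (i : Chir), ‖dd θ x i * u x i‖ ^ 2 ≤ T) :
    ∀ x : Site, x.1 < -M₀ → u x 1 = 0 := by
  intro x hx
  by_contra hne
  have hM := hA1.1
  have hgrow : ∀ k : ℕ, Real.exp (κ.im - θ.im) ^ k * ‖dd θ x 1 * u x 1‖ =
      ‖dd θ (x.1 - (k : ℤ), x.2) 1 * u (x.1 - (k : ℤ), x.2) 1‖ := by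
    intro k
    have hcoin : ∀ m : ℤ, x.1 - (k : ℤ) ≤ m → m < x.1 → C (m, x.2) = 1 :=
      fun m h1 h2 => coin_one' hA1 m x.2 (Or.inl (by rw [lt_abs]; omega))
    have hiter := iter1 hu x k hcoin
    rw [hiter]
    have hdd : dd θ (x.1 - (k : ℤ), x.2) 1 = Complex.exp (Complex.I * θ * k) * dd θ x 1 := by
      rw [dd1, dd1, ← Complex.exp_add]; congr 1; push_cast; ring
    rw [hdd, show Complex.exp (Complex.I * θ * (k : ℕ)) * dd θ x 1 * (E ^ k * u x 1)
        = (Complex.exp (Complex.I * θ * (k : ℕ)) * E ^ k) * (dd θ x 1 * u x 1) by ring]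
    have hnorm : ‖Complex.exp (Complex.I * θ * (k : ℕ)) * E ^ k‖
        = Real.exp (κ.im - θ.im) ^ k := by
      rw [← Complex.exp_nat_mul, ← Complex.exp_add, norm_exp', ← Real.exp_nat_mul]
      have hre : (Complex.I * θ * (k : ℕ) + (k : ℕ) * -(Complex.I * κ)).re
          = (k : ℕ) * (κ.im - θ.im) := by
        simp [Complex.mul_re, Complex.mul_im]
        ring
      rw [hre]
    conv_rhs => rw [norm_mul]
    rw [hnorm]
  have hcpos : 0 < ‖dd θ x 1 * u x 1‖ :=
    norm_pos_iff.mpr (mul_ne_zero (dd_ne_zero θ x 1) hne)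
  refine contra_growth (T := T) (Real.one_lt_exp_iff.mpr (by linarith : (0:ℝ) < κ.im - θ.im))
    hcpos (fun k => ?_)
  rw [hgrow k]
  exact hb _ 1

lemma vanish2 {θ : ℂ} (hu : IsPtSolution C κ u) (hA1 : SatisfiesA1 C M₀)
    (hβ : θ.im < κ.im) {T : ℝ} (hb : ∀ (x : Site) (i : Chir), ‖dd θ x i * u x i‖ ^ 2 ≤ T) :
    ∀ x : Site, M₀ < x.2 → u x 2 = 0 := by
  intro x hx
  by_contra hne
  have hM := hA1.1
  have hgrow : ∀ k : ℕ, Real.exp (κ.im - θ.im) ^ k * ‖dd θ x 2 * u x 2‖ =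
      ‖dd θ (x.1, x.2 + (k : ℤ)) 2 * u (x.1, x.2 + (k : ℤ)) 2‖ := by
    intro k
    have hcoin : ∀ m : ℤ, x.2 < m → m ≤ x.2 + (k : ℤ) → C (x.1, m) = 1 :=
      fun m h1 h2 => coin_one' hA1 x.1 m (Or.inr (by rw [lt_abs]; omega))
    have hiter := iter2 hu x k hcoin
    rw [hiter]
    have hdd : dd θ (x.1, x.2 + (k : ℤ)) 2 = Complex.exp (Complex.I * θ * k) * dd θ x 2 := by
      rw [dd2, dd2, ← Complex.exp_add]; congr 1; push_cast; ring
    rw [hdd, show Complex.exp (Complex.I * θ * (k : ℕ)) * dd θ x 2 * (E ^ k * u x 2)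
        = (Complex.exp (Complex.I * θ * (k : ℕ)) * E ^ k) * (dd θ x 2 * u x 2) by ring]
    have hnorm : ‖Complex.exp (Complex.I * θ * (k : ℕ)) * E ^ k‖
        = Real.exp (κ.im - θ.im) ^ k := by
      rw [← Complex.exp_nat_mul, ← Complex.exp_add, norm_exp', ← Real.exp_nat_mul]
      have hre : (Complex.I * θ * (k : ℕ) + (k : ℕ) * -(Complex.I * κ)).re
          = (k : ℕ) * (κ.im - θ.im) := by
        simp [Complex.mul_re, Complex.mul_im]
        ring
      rw [hre]
    conv_rhs => rw [norm_mul]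
    rw [hnorm]
  have hcpos : 0 < ‖dd θ x 2 * u x 2‖ :=
    norm_pos_iff.mpr (mul_ne_zero (dd_ne_zero θ x 2) hne)
  refine contra_growth (T := T) (Real.one_lt_exp_iff.mpr (by linarith : (0:ℝ) < κ.im - θ.im))
    hcpos (fun k => ?_)
  rw [hgrow k]
  exact hb _ 2

lemma vanish3 {θ : ℂ} (hu : IsPtSolution C κ u) (hA1 : SatisfiesA1 C M₀)
    (hβ : θ.im < κ.im) {T : ℝ} (hb : ∀ (x : Site) (i : Chir), ‖dd θ x i * u x i‖ ^ 2 ≤ T) :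
    ∀ x : Site, x.2 < -M₀ → u x 3 = 0 := by
  intro x hx
  by_contra hne
  have hM := hA1.1
  have hgrow : ∀ k : ℕ, Real.exp (κ.im - θ.im) ^ k * ‖dd θ x 3 * u x 3‖ =
      ‖dd θ (x.1, x.2 - (k : ℤ)) 3 * u (x.1, x.2 - (k : ℤ)) 3‖ := by
    intro k
    have hcoin : ∀ m : ℤ, x.2 - (k : ℤ) ≤ m → m < x.2 → C (x.1, m) = 1 :=
      fun m h1 h2 => coin_one' hA1 x.1 m (Or.inr (by rw [lt_abs]; omega))
    have hiter := iter3 hu x k hcoin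
    rw [hiter]
    have hdd : dd θ (x.1, x.2 - (k : ℤ)) 3 = Complex.exp (Complex.I * θ * k) * dd θ x 3 := by
      rw [dd3, dd3, ← Complex.exp_add]; congr 1; push_cast; ring
    rw [hdd, show Complex.exp (Complex.I * θ * (k : ℕ)) * dd θ x 3 * (E ^ k * u x 3)
        = (Complex.exp (Complex.I * θ * (k : ℕ)) * E ^ k) * (dd θ x 3 * u x 3) by ring]
    have hnorm : ‖Complex.exp (Complex.I * θ * (k : ℕ)) * E ^ k‖
        = Real.exp (κ.im - θ.im) ^ k := by
      rw [← Complex.exp_nat_mul, ← Complex.exp_add, norm_exp', ← Real.exp_nat_mul]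
      have hre : (Complex.I * θ * (k : ℕ) + (k : ℕ) * -(Complex.I * κ)).re
          = (k : ℕ) * (κ.im - θ.im) := by
        simp [Complex.mul_re, Complex.mul_im]
        ring
      rw [hre]
    conv_rhs => rw [norm_mul]
    rw [hnorm]
  have hcpos : 0 < ‖dd θ x 3 * u x 3‖ :=
    norm_pos_iff.mpr (mul_ne_zero (dd_ne_zero θ x 3) hne)
  refine contra_growth (T := T) (Real.one_lt_exp_iff.mpr (by linarith : (0:ℝ) < κ.im - θ.im))
    hcpos (fun k => ?_)
  rw [hgrow k]
  exact hb _ 3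

lemma norm_prod_exp_sq (a z1 z2 : ℂ) (β t : ℝ) (h : (z1 + z2).re = β * t) :
    ‖Complex.exp z1 * (a * Complex.exp z2)‖ ^ 2 = ‖a‖ ^ 2 * Real.exp (2 * β * t) := by
  rw [show Complex.exp z1 * (a * Complex.exp z2) = a * Complex.exp (z1 + z2) by
      rw [Complex.exp_add]; ring,
    norm_mul, mul_pow, norm_exp', h]
  congr 1
  rw [← Real.exp_nat_mul]
  congr 1
  push_cast; ring

lemma comps_summable_of_outgoing {θ : ℂ} (hu : IsPtSolution C κ u) (hA1 : SatisfiesA1 C M₀)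
    (hβ : θ.im < κ.im) {aL aR aD aU : ℤ → ℂ}
    (hout : IsOutgoingWith M₀ κ aL aR aD aU u) :
    Summable (fun x : Site => ∑ i : Chir, ‖dd θ x i * u x i‖ ^ 2) := by
  obtain ⟨o1, o2, o3, o4, o5, o6, o7, o8⟩ := hout
  have hM := hA1.1
  set β : ℝ := κ.im - θ.im with hβdef
  have hβ0 : 0 < β := by rw [hβdef]; linarith
  have h0 : Summable (fun x : Site => ‖dd θ x 0 * u x 0‖ ^ 2) := by
    refine summable_dominated M₀ hM β hβ0 aL _ (fun x => by positivity) ?_ ?_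
    · rintro x (hx | hx)
      · rw [o2 x hx]; simp
      · have hz := zrow0 hu hA1 hx (fun m hm => o2 (m, x.2) hm) x.1
        simp only [Prod.mk.eta] at hz
        rw [hz]; simp
    · intro x hx1 hx2
      rw [dd0, o1 x hx1]
      exact norm_prod_exp_sq _ _ _ β (x.1 : ℝ)
        (by rw [hβdef]; simp [Complex.mul_re, Complex.mul_im]; ring)
  have h1 : Summable (fun x : Site => ‖dd θ x 1 * u x 1‖ ^ 2) := by
    have h1' : Summable (fun x : Site => ‖dd θ (-x.1, x.2) 1 * u (-x.1, x.2) 1‖ ^ 2) := by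
      refine summable_dominated M₀ hM β hβ0 aR _ (fun x => by positivity) ?_ ?_
      · rintro x (hx | hx)
        · rw [o3 (-x.1, x.2) (show (-x.1 : ℤ) < -M₀ by omega)]; simp
        · have hz := zrow1 hu hA1 hx (fun m hm => o3 (m, x.2) hm) (-x.1)
          rw [hz]; simp
      · intro x hx1 hx2
        rw [dd1, o4 (-x.1, x.2) (show M₀ < (-x.1 : ℤ) by omega)]
        have hc : ((-x.1 : ℤ) : ℂ) = -((x.1 : ℤ) : ℂ) := by push_cast; ring
        rw [show ((-x.1, x.2) : Site).1 = (-x.1 : ℤ) from rfl, hc]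
        exact norm_prod_exp_sq _ _ _ β (x.1 : ℝ)
          (by rw [hβdef]; simp [Complex.mul_re, Complex.mul_im]; ring)
    let e1 : Site ≃ Site :=
      ⟨fun x => (-x.1, x.2), fun x => (-x.1, x.2), fun x => by simp, fun x => by simp⟩
    exact (e1.summable_iff (f := fun x : Site => ‖dd θ x 1 * u x 1‖ ^ 2)).mp h1'
  have h2 : Summable (fun x : Site => ‖dd θ x 2 * u x 2‖ ^ 2) := by
    have h2' : Summable (fun x : Site => ‖dd θ (x.2, x.1) 2 * u (x.2, x.1) 2‖ ^ 2) := by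
      refine summable_dominated M₀ hM β hβ0 aD _ (fun x => by positivity) ?_ ?_
      · rintro x (hx | hx)
        · rw [o6 (x.2, x.1) hx]; simp
        · have hz := zcol2 hu hA1 hx (fun m hm => o6 (x.2, m) hm) x.1
          rw [hz]; simp
      · intro x hx1 hx2
        rw [dd2, o5 (x.2, x.1) hx1]
        exact norm_prod_exp_sq _ _ _ β (x.1 : ℝ)
          (by rw [hβdef]; simp [Complex.mul_re, Complex.mul_im]; ring)
    let e2 : Site ≃ Site :=
      ⟨fun x => (x.2, x.1), fun x => (x.2, x.1), fun x => by simp, fun x => by simp⟩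
    exact (e2.summable_iff (f := fun x : Site => ‖dd θ x 2 * u x 2‖ ^ 2)).mp h2'
  have h3 : Summable (fun x : Site => ‖dd θ x 3 * u x 3‖ ^ 2) := by
    have h3' : Summable (fun x : Site => ‖dd θ (x.2, -x.1) 3 * u (x.2, -x.1) 3‖ ^ 2) := by
      refine summable_dominated M₀ hM β hβ0 aU _ (fun x => by positivity) ?_ ?_
      · rintro x (hx | hx)
        · rw [o7 (x.2, -x.1) (show (-x.1 : ℤ) < -M₀ by omega)]; simp
        · have hz := zcol3 hu hA1 hx (fun m hm => o7 (x.2, m) hm) (-x.1)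
          rw [hz]; simp
      · intro x hx1 hx2
        rw [dd3, o8 (x.2, -x.1) (show M₀ < (-x.1 : ℤ) by omega)]
        have hc : ((-x.1 : ℤ) : ℂ) = -((x.1 : ℤ) : ℂ) := by push_cast; ring
        rw [show ((x.2, -x.1) : Site).2 = (-x.1 : ℤ) from rfl, hc]
        exact norm_prod_exp_sq _ _ _ β (x.1 : ℝ)
          (by rw [hβdef]; simp [Complex.mul_re, Complex.mul_im]; ring)
    let e3 : Site ≃ Site :=
      ⟨fun x => (x.2, -x.1), fun y => (-y.2, y.1), fun x => by simp, fun x => by simp⟩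
    exact (e3.summable_iff (f := fun x : Site => ‖dd θ x 3 * u x 3‖ ^ 2)).mp h3'
  simp only [Fin.sum_univ_four]
  exact ((h0.add h1).add h2).add h3

lemma transCoin_apply (θ : ℂ) (y : Site) (i j : Chir) :
    transCoin θ C y i j = dd θ y i * C y i j * (dd θ y j)⁻¹ := by
  have hinv : (Matrix.diagonal (dd θ y))⁻¹
      = Matrix.diagonal (fun i => (dd θ y i)⁻¹) := by
    apply Matrix.inv_eq_left_inv
    rw [Matrix.diagonal_mul_diagonal]
    ext a b
    by_cases h : a = b <;>
      simp [Matrix.diagonal_apply, Matrix.one_apply, h,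
        inv_mul_cancel₀ (dd_ne_zero θ y b)]
  rw [transCoin, Dmat_eq, hinv, Matrix.mul_diagonal, Matrix.diagonal_mul]

lemma Mθ_apply {θ : ℂ} {Mθ : H →L[ℂ] H} (hMθ : IsCoinOp Mθ (transCoin θ C))
    (v : H) (u : Site → Chir → ℂ)
    (hv : ∀ (x : Site) (i : Chir), v x i = dd θ x i * u x i) (y : Site) (i : Chir) :
    (Mθ v) y i = dd θ y i * ptCoin C u y i := by
  rw [hMθ v y i, ptCoin, Finset.mul_sum]
  refine Finset.sum_congr rfl (fun j _ => ?_)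
  rw [transCoin_apply, hv y j]
  have hne := dd_ne_zero θ y j
  field_simp

lemma key {θ : ℂ} {S Mθ : H →L[ℂ] H} (hS : IsShiftOp S) (hMθ : IsCoinOp Mθ (transCoin θ C))
    (v : H) (u : Site → Chir → ℂ)
    (hv : ∀ (x : Site) (i : Chir), v x i = dd θ x i * u x i) :
    ∀ (x : Site) (i : Chir),
      ((transWalkOp θ S Mθ) v) x i = dd θ x i * ptWalk C u x i := by
  intro x i
  have hsm : ((transWalkOp θ S Mθ) v) x i
      = Complex.exp (-(Complex.I * θ)) * (S (Mθ v)) x i := by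
    rw [transWalkOp, ContinuousLinearMap.smul_apply, lp.coeFn_smul, Pi.smul_apply]
    simp [ContinuousLinearMap.comp_apply]
  have h4 : i = 0 ∨ i = 1 ∨ i = 2 ∨ i = 3 := by fin_cases i <;> decide
  rcases h4 with rfl | rfl | rfl | rfl
  · rw [hsm, (hS (Mθ v) x).1, Mθ_apply hMθ v u hv (x.1 + 1, x.2) 0, ptWalk0]
    have hdd : Complex.exp (-(Complex.I * θ)) * dd θ (x.1 + 1, x.2) 0 = dd θ x 0 := by
      rw [dd0, dd0, ← Complex.exp_add]; congr 1; push_cast; ring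
    linear_combination (ptCoin C u (x.1 + 1, x.2) 0) * hdd
  · rw [hsm, (hS (Mθ v) x).2.1, Mθ_apply hMθ v u hv (x.1 - 1, x.2) 1, ptWalk1]
    have hdd : Complex.exp (-(Complex.I * θ)) * dd θ (x.1 - 1, x.2) 1 = dd θ x 1 := by
      rw [dd1, dd1, ← Complex.exp_add]; congr 1; push_cast; ring
    linear_combination (ptCoin C u (x.1 - 1, x.2) 1) * hdd
  · rw [hsm, (hS (Mθ v) x).2.2.1, Mθ_apply hMθ v u hv (x.1, x.2 + 1) 2, ptWalk2]
    have hdd : Complex.exp (-(Complex.I * θ)) * dd θ (x.1, x.2 + 1) 2 = dd θ x 2 := by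
      rw [dd2, dd2, ← Complex.exp_add]; congr 1; push_cast; ring
    linear_combination (ptCoin C u (x.1, x.2 + 1) 2) * hdd
  · rw [hsm, (hS (Mθ v) x).2.2.2, Mθ_apply hMθ v u hv (x.1, x.2 - 1) 3, ptWalk3]
    have hdd : Complex.exp (-(Complex.I * θ)) * dd θ (x.1, x.2 - 1) 3 = dd θ x 3 := by
      rw [dd3, dd3, ← Complex.exp_add]; congr 1; push_cast; ring
    linear_combination (ptCoin C u (x.1, x.2 - 1) 3) * hdd

end Sol
end Aux

/-- `e^{−iκ}` is an eigenvalue of `U(θ)` iff there is a nonzero outgoing pointwise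
solution of `Uu = e^{−iκ}u`; the sequences `a_j` are supported in `[−M₀, M₀]`; and a pointwise
solution is outgoing iff `x ↦ D_x(θ)u(x)` belongs to `H`. -/
theorem resonance_iff_outgoing_solution
    (M₀ : ℤ) (C : Site → Matrix Chir Chir ℂ)
    (hC : IsUnitaryCoin C) (hA1 : SatisfiesA1 C M₀)
    (S : H →L[ℂ] H) (hS : IsShiftOp S)
    (κ θ : ℂ) (hκ : κ.im < 0) (hθ : θ.im < κ.im)
    (Mθ : H →L[ℂ] H) (hMθ : IsCoinOp Mθ (transCoin θ C)) :
    ((∃ v : H, v ≠ 0 ∧ (transWalkOp θ S Mθ) v = Complex.exp (-(Complex.I * κ)) • v) ↔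
      (∃ u : Site → Chir → ℂ, u ≠ 0 ∧ IsOutgoing M₀ κ u ∧ IsPtSolution C κ u)) ∧
    (∀ u : Site → Chir → ℂ, IsPtSolution C κ u → IsOutgoing M₀ κ u →
      ∃ aL aR aD aU : ℤ → ℂ, IsOutgoingWith M₀ κ aL aR aD aU u ∧
        ∀ n : ℤ, M₀ < |n| → aL n = 0 ∧ aR n = 0 ∧ aD n = 0 ∧ aU n = 0) ∧
    (∀ u : Site → Chir → ℂ, IsPtSolution C κ u →
      (IsOutgoing M₀ κ u ↔ Memℓp (fun x : Site => (WithLp.toLp 2 ((Dmat θ x).mulVec (u x)) : V)) 2)) := by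
  have part3 : ∀ u : Site → Chir → ℂ, IsPtSolution C κ u →
      (IsOutgoing M₀ κ u ↔ Memℓp (fun x : Site => (WithLp.toLp 2 ((Dmat θ x).mulVec (u x)) : V)) 2) := by
    intro u hu
    constructor
    · rintro ⟨aL, aR, aD, aU, hout⟩
      exact memPi_of_comps (comps_summable_of_outgoing hu hA1 hθ hout)
    · intro hmem
      obtain ⟨T, hb⟩ := bound_of_mem hmem
      exact ⟨fun n => u (-(M₀ + 1), n) 0 * Complex.exp (-(Complex.I * κ * (M₀ + 1))),
        fun n => u (M₀ + 1, n) 1 * Complex.exp (-(Complex.I * κ * (M₀ + 1))),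
        fun n => u (n, -(M₀ + 1)) 2 * Complex.exp (-(Complex.I * κ * (M₀ + 1))),
        fun n => u (n, M₀ + 1) 3 * Complex.exp (-(Complex.I * κ * (M₀ + 1))),
        fun x hx => rad0 hu hA1 x hx,
        fun x hx => vanish0 hu hA1 hθ hb x hx,
        fun x hx => vanish1 hu hA1 hθ hb x hx,
        fun x hx => rad1 hu hA1 x hx,
        fun x hx => rad2 hu hA1 x hx,
        fun x hx => vanish2 hu hA1 hθ hb x hx,
        fun x hx => vanish3 hu hA1 hθ hb x hx,
        fun x hx => rad3 hu hA1 x hx⟩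
  have hM := hA1.1
  refine ⟨⟨?_, ?_⟩, ?_, part3⟩
  · -- eigenvector → outgoing solution
    rintro ⟨v, hv0, hveq⟩
    set u : Site → Chir → ℂ := fun x i => (dd θ x i)⁻¹ * v x i with hudef
    have hv : ∀ (x : Site) (i : Chir), v x i = dd θ x i * u x i := by
      intro x i
      rw [hudef]
      exact (mul_inv_cancel_left₀ (dd_ne_zero θ x i) _).symm
    have hkey := key hS hMθ v u hv
    have hsol : IsPtSolution C κ u := by
      intro x i
      have h1 := hkey x i
      rw [hveq] at h1
      have h2 : ((Complex.exp (-(Complex.I * κ)) • v : H)) x i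
          = Complex.exp (-(Complex.I * κ)) * v x i := by
        rw [lp.coeFn_smul, Pi.smul_apply]
        simp
      rw [h2, hv x i] at h1
      refine mul_left_cancel₀ (dd_ne_zero θ x i) ?_
      linear_combination -h1
    have hne : u ≠ 0 := by
      intro h0
      apply hv0
      apply lp.ext
      funext x
      have hz : ((0 : H) : ∀ _ : Site, V) x = 0 := by rw [lp.coeFn_zero]; rfl
      rw [hz]
      refine PiLp.ext (fun i => ?_)
      rw [hv x i, h0]
      simp
    have hout : IsOutgoing M₀ κ u := by
      rw [part3 u hsol]
      apply memPi_of_comps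
      have hcongr : (fun x : Site => ∑ i : Chir, ‖dd θ x i * u x i‖ ^ 2)
          = fun x : Site => ∑ i : Chir, ‖v x i‖ ^ 2 := by
        funext x
        exact Finset.sum_congr rfl (fun i _ => by rw [hv x i])
      rw [hcongr]
      have hs := (memℓp_gen_iff (p := 2) (by norm_num)).mp (lp.memℓp v)
      exact (summable_congr (fun x => norm_sq_V (v x))).mp hs
    exact ⟨u, hne, hout, hsol⟩
  · -- outgoing solution → eigenvector
    rintro ⟨u, hne, hout, hsol⟩
    have hsum : Summable (fun x : Site => ∑ i : Chir, ‖dd θ x i * u x i‖ ^ 2) := by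
      obtain ⟨aL, aR, aD, aU, hw⟩ := hout
      exact comps_summable_of_outgoing hsol hA1 hθ hw
    have hmemH : Memℓp (E := fun _ : Site => V)
        (fun x : Site => (WithLp.toLp 2 ((Dmat θ x).mulVec (u x)) : V)) 2 := by
      apply mem_lp_V (f := fun x : Site => (WithLp.toLp 2 ((Dmat θ x).mulVec (u x)) : V))
      refine (summable_congr (fun x => ?_)).mpr hsum
      exact Finset.sum_congr rfl (fun i _ => by rw [WithLp.ofLp_toLp, mulVec_Dmat])
    set v : H := ⟨fun x : Site => (WithLp.toLp 2 ((Dmat θ x).mulVec (u x)) : V), hmemH⟩ with hvdef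
    have hvapp : ∀ (x : Site) (i : Chir), v x i = dd θ x i * u x i := by
      intro x i
      exact mulVec_Dmat θ x (u x) i
    have hv0 : v ≠ 0 := by
      intro h0
      apply hne
      funext x i
      have h1 := hvapp x i
      rw [h0] at h1
      have hz : ((0 : H) : ∀ _ : Site, V) x i = 0 := by rw [lp.coeFn_zero]; rfl
      rw [hz] at h1
      have := (mul_eq_zero.mp h1.symm).resolve_left (dd_ne_zero θ x i)
      simpa using this
    have heq : (transWalkOp θ S Mθ) v = Complex.exp (-(Complex.I * κ)) • v := by
      apply lp.ext
      funext x
      refine PiLp.ext (fun i => ?_)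
      have h2 : ((Complex.exp (-(Complex.I * κ)) • v : H)) x i
          = Complex.exp (-(Complex.I * κ)) * v x i := by
        rw [lp.coeFn_smul, Pi.smul_apply]
        simp
      rw [key hS hMθ v u hvapp x i, hsol x i, h2, hvapp x i]
      ring
    exact ⟨v, hv0, heq⟩
  · -- support of the sequences
    rintro u hu ⟨aL, aR, aD, aU, hout⟩
    obtain ⟨o1, o2, o3, o4, o5, o6, o7, o8⟩ := hout
    refine ⟨aL, aR, aD, aU, ⟨o1, o2, o3, o4, o5, o6, o7, o8⟩, fun n hn => ?_⟩
    refine ⟨?_, ?_, ?_, ?_⟩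
    · have h := zrow0 hu hA1 hn (fun m hm => o2 (m, n) hm) (-(M₀ + 1))
      have h2 := o1 (-(M₀ + 1), n) (show (-(M₀ + 1) : ℤ) < -M₀ by omega)
      rw [h] at h2
      exact ((mul_eq_zero.mp h2.symm).resolve_right (Complex.exp_ne_zero _))
    · have h := zrow1 hu hA1 hn (fun m hm => o3 (m, n) hm) (M₀ + 1)
      have h2 := o4 (M₀ + 1, n) (show M₀ < M₀ + 1 by omega)
      rw [h] at h2
      exact ((mul_eq_zero.mp h2.symm).resolve_right (Complex.exp_ne_zero _))
    · have h := zcol2 hu hA1 hn (fun m hm => o6 (n, m) hm) (-(M₀ + 1))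
      have h2 := o5 (n, -(M₀ + 1)) (show (-(M₀ + 1) : ℤ) < -M₀ by omega)
      rw [h] at h2
      exact ((mul_eq_zero.mp h2.symm).resolve_right (Complex.exp_ne_zero _))
    · have h := zcol3 hu hA1 hn (fun m hm => o7 (n, m) hm) (M₀ + 1)
      have h2 := o8 (n, M₀ + 1) (show M₀ < M₀ + 1 by omega)
      rw [h] at h2
      exact ((mul_eq_zero.mp h2.symm).resolve_right (Complex.exp_ne_zero _))


end QWPaper
end
end
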